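/- arXiv:1010.2420 — 6 statements merged into one kernel-verified Lean document; each statement's English description precedes it below -/
import Mathlib

section
/- In a reachability game with target set F, Eve has a winning strategy from v if and only if v belongs to the attractor Attr(F). -/
/-- An arena: a directed graph with every vertex having a successor,
and a partition of vertices between Eve (`eve v`) and Adam (`¬ eve v`). -/
structure Arena (V : Type) where
  E : V → V → Prop
  eve : V → Prop
  succ_exists : ∀ v, ∃ w, E v w

variable {V M : Type}

/-- A play from `v0`: an infinite path starting at `v0`. -/
def IsPlay (A : Arena V) (v0 : V) (π : ℕ → V) : Prop :=
  π 0 = v0 ∧ ∀ n, A.E (π n) (π (n + 1))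

/-- The finite history of a play up to time `n` (inclusive). -/
def hist (π : ℕ → V) (n : ℕ) : List V :=
  List.ofFn (fun i : Fin (n + 1) => π i)

/-- A strategy (a function from histories to vertices) is legal if it always moves along edges. -/
def Legal (A : Arena V) (σ : List V → V) : Prop :=
  ∀ (l : List V) (v : V), A.E v (σ (l ++ [v]))

/-- A play is consistent with Eve's strategy `σ`. -/
def ConsistentEve (A : Arena V) (σ : List V → V) (π : ℕ → V) : Prop :=
  ∀ n, A.eve (π n) → π (n + 1) = σ (hist π n)

/-- A play is consistent with Adam's strategy `τ`. -/
def ConsistentAdam (A : Arena V) (τ : List V → V) (π : ℕ → V) : Prop :=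
  ∀ n, ¬ A.eve (π n) → π (n + 1) = τ (hist π n)

/-- The generalized reachability objective: visit each `F i` at least once. -/
def GenReach {k : ℕ} (F : Fin k → Set V) (π : ℕ → V) : Prop :=
  ∀ i, ∃ n, π n ∈ F i

/-- Eve wins the generalized reachability game from `v0`. -/
def EveWinsGenReach {k : ℕ} (A : Arena V) (F : Fin k → Set V) (v0 : V) : Prop :=
  ∃ σ, Legal A σ ∧ ∀ π, IsPlay A v0 π → ConsistentEve A σ π → GenReach F π

/-- Adam wins the generalized reachability game from `v0`. -/
def AdamWinsGenReach {k : ℕ} (A : Arena V) (F : Fin k → Set V) (v0 : V) : Prop :=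
  ∃ τ, Legal A τ ∧ ∀ π, IsPlay A v0 π → ConsistentAdam A τ π → ¬ GenReach F π

/-- One step of the attractor computation. -/
def AttrStep (A : Arena V) (X : Set V) : Set V :=
  X ∪ {u | A.eve u ∧ ∃ v, A.E u v ∧ v ∈ X} ∪ {u | ¬ A.eve u ∧ ∀ v, A.E u v → v ∈ X}

/-- The attractor sequence `Attr_i(F)`. -/
def AttrSeq (A : Arena V) (F : Set V) : ℕ → Set V
  | 0 => F
  | n + 1 => AttrStep A (AttrSeq A F n)

/-- The attractor `Attr(F)`: union of the attractor sequence. -/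
def Attr (A : Arena V) (F : Set V) : Set V := ⋃ n, AttrSeq A F n

/-- A memory structure: initial memory state and update function on edges. -/
structure MemStruct (V M : Type) where
  m0 : M
  upd : M → V → V → M

/-- The sequence of memory states along a play. -/
def memTrace (μ : MemStruct V M) (π : ℕ → V) : ℕ → M
  | 0 => μ.m0
  | n + 1 => μ.upd (memTrace μ π n) (π n) (π (n + 1))

/-- A next-move function is legal if it always moves along edges. -/
def MemLegal (A : Arena V) (ν : V → M → V) : Prop :=
  ∀ v m, A.E v (ν v m)

/-- Consistency of a play with Eve's finite-memory strategy `(μ, ν)`. -/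
def MemConsistentEve (A : Arena V) (μ : MemStruct V M) (ν : V → M → V) (π : ℕ → V) : Prop :=
  ∀ n, A.eve (π n) → π (n + 1) = ν (π n) (memTrace μ π n)

/-- Consistency of a play with Adam's finite-memory strategy `(μ, ν)`. -/
def MemConsistentAdam (A : Arena V) (μ : MemStruct V M) (ν : V → M → V) (π : ℕ → V) : Prop :=
  ∀ n, ¬ A.eve (π n) → π (n + 1) = ν (π n) (memTrace μ π n)

/-- Eve wins with the finite-memory strategy `(μ, ν)` from `v0`. -/
def EveWinsWithMem {k : ℕ} (A : Arena V) (F : Fin k → Set V) (v0 : V)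
    (μ : MemStruct V M) (ν : V → M → V) : Prop :=
  MemLegal A ν ∧ ∀ π, IsPlay A v0 π → MemConsistentEve A μ ν π → GenReach F π

/-- Adam wins with the finite-memory strategy `(μ, ν)` from `v0`. -/
def AdamWinsWithMem {k : ℕ} (A : Arena V) (F : Fin k → Set V) (v0 : V)
    (μ : MemStruct V M) (ν : V → M → V) : Prop :=
  MemLegal A ν ∧ ∀ π, IsPlay A v0 π → MemConsistentAdam A μ ν π → ¬ GenReach F π


/-- Eve wins the reachability game with target `F` from `v0`. -/
def EveWinsReach (A : Arena V) (F : Set V) (v0 : V) : Prop :=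
  ∃ σ, Legal A σ ∧ ∀ π, IsPlay A v0 π → ConsistentEve A σ π → ∃ n, π n ∈ F


section AuxReach

variable {V : Type}

lemma attrStep_subset (A : Arena V) (X : Set V) : X ⊆ AttrStep A X :=
  fun _ hx => Or.inl (Or.inl hx)

lemma attrSeq_mono (A : Arena V) (F : Set V) : Monotone (AttrSeq A F) := by
  apply monotone_nat_of_le_succ
  intro n
  exact attrStep_subset A (AttrSeq A F n)

noncomputable def rankA (A : Arena V) (F : Set V) (w : V) : ℕ := sInf {n | w ∈ AttrSeq A F n}

lemma mem_attrSeq_rankA {A : Arena V} {F : Set V} {w : V} (hw : w ∈ Attr A F) :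
    w ∈ AttrSeq A F (rankA A F w) := by
  obtain ⟨n, hn⟩ := Set.mem_iUnion.mp hw
  exact Nat.sInf_mem (⟨n, hn⟩ : Set.Nonempty {k | w ∈ AttrSeq A F k})

lemma rankA_le {A : Arena V} {F : Set V} {w : V} {n : ℕ} (h : w ∈ AttrSeq A F n) :
    rankA A F w ≤ n := Nat.sInf_le h

lemma attr_eve_step {A : Arena V} {F : Set V} {v : V} (hv : v ∈ Attr A F)
    (he : A.eve v) (h0 : v ∉ F) :
    ∃ w, A.E v w ∧ w ∈ AttrSeq A F (rankA A F v - 1) := by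
  have hm := mem_attrSeq_rankA hv
  rcases Nat.eq_zero_or_pos (rankA A F v) with h | h
  · rw [h] at hm; exact absurd hm h0
  obtain ⟨k, hk⟩ : ∃ k, rankA A F v = k + 1 := ⟨rankA A F v - 1, (Nat.succ_pred_eq_of_pos h).symm⟩
  rw [hk] at hm
  have hnk : v ∉ AttrSeq A F k := fun hc => by
    have := rankA_le hc; omega
  rcases hm with (hm | hm) | hm
  · exact absurd hm hnk
  · obtain ⟨w, hw1, hw2⟩ := hm.2
    refine ⟨w, hw1, ?_⟩
    have : rankA A F v - 1 = k := by omega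
    rw [this]; exact hw2
  · exact absurd he hm.1

open Classical in
noncomputable def evef (A : Arena V) (F : Set V) (v : V) : V :=
  if h : ∃ w, A.E v w ∧ w ∈ AttrSeq A F (rankA A F v - 1) then h.choose
  else (A.succ_exists v).choose

lemma evef_edge (A : Arena V) (F : Set V) (v : V) : A.E v (evef A F v) := by
  unfold evef
  split
  · next h => exact h.choose_spec.1
  · exact (A.succ_exists v).choose_spec

lemma evef_mem {A : Arena V} {F : Set V} {v : V}
    (h : ∃ w, A.E v w ∧ w ∈ AttrSeq A F (rankA A F v - 1)) :
    evef A F v ∈ AttrSeq A F (rankA A F v - 1) := by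
  unfold evef
  rw [dif_pos h]
  exact h.choose_spec.2

open Classical in
noncomputable def adamf (A : Arena V) (F : Set V) (v : V) : V :=
  if h : ∃ w, A.E v w ∧ w ∉ Attr A F then h.choose
  else (A.succ_exists v).choose

lemma adamf_edge (A : Arena V) (F : Set V) (v : V) : A.E v (adamf A F v) := by
  unfold adamf
  split
  · next h => exact h.choose_spec.1
  · exact (A.succ_exists v).choose_spec

lemma adam_escape [Fintype V] {A : Arena V} {F : Set V} {v : V}
    (hv : v ∉ Attr A F) (ha : ¬ A.eve v) :
    ∃ w, A.E v w ∧ w ∉ Attr A F := by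
  by_contra hc
  push_neg at hc
  apply hv
  refine Set.mem_iUnion.mpr ⟨Finset.univ.sup (rankA A F) + 1, ?_⟩
  refine Or.inr ⟨ha, fun w hw => ?_⟩
  exact attrSeq_mono A F (Finset.le_sup (Finset.mem_univ w)) (mem_attrSeq_rankA (hc w hw))

lemma adamf_not_mem [Fintype V] {A : Arena V} {F : Set V} {v : V}
    (hv : v ∉ Attr A F) (ha : ¬ A.eve v) : adamf A F v ∉ Attr A F := by
  have h := adam_escape hv ha
  unfold adamf
  rw [dif_pos h]
  exact h.choose_spec.2

lemma eve_trap {A : Arena V} {F : Set V} {v w : V}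
    (hv : v ∉ Attr A F) (he : A.eve v) (hw : A.E v w) : w ∉ Attr A F := by
  intro hc
  obtain ⟨n, hn⟩ := Set.mem_iUnion.mp hc
  exact hv (Set.mem_iUnion.mpr ⟨n + 1, Or.inl (Or.inr ⟨he, w, hw, hn⟩)⟩)

lemma hist_eq_append (π : ℕ → V) (n : ℕ) :
    hist π n = (List.ofFn fun i : Fin n => π i) ++ [π n] := by
  rw [hist, List.ofFn_succ']
  simp [List.concat_eq_append]

lemma hist_getLastD (π : ℕ → V) (n : ℕ) (d : V) : (hist π n).getLastD d = π n := by
  rw [hist_eq_append]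
  exact List.getLastD_concat

noncomputable def playAux (step : List V → V) (v : V) : ℕ → List V
  | 0 => [v]
  | n + 1 => playAux step v n ++ [step (playAux step v n)]

noncomputable def play (step : List V → V) (v : V) (n : ℕ) : V := (playAux step v n).getLastD v

lemma play_zero (step : List V → V) (v : V) : play step v 0 = v := rfl

lemma play_succ (step : List V → V) (v : V) (n : ℕ) :
    play step v (n + 1) = step (playAux step v n) := by
  rw [play, playAux, List.getLastD_concat]

lemma playAux_eq_hist (step : List V → V) (v : V) :
    ∀ n, playAux step v n = hist (play step v) n
  | 0 => by
      simp [playAux, hist, play_zero, List.ofFn_succ]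
  | n + 1 => by
      rw [playAux, playAux_eq_hist step v n, hist_eq_append (play step v) (n + 1)]
      have h1 : (List.ofFn fun i : Fin (n + 1) => play step v i) = hist (play step v) n := rfl
      rw [h1]
      have h2 : play step v (n + 1) = step (hist (play step v) n) := by
        rw [play_succ, playAux_eq_hist step v n]
      rw [h2]

end AuxReach

/-- Eve wins the reachability game from `v` iff `v ∈ Attr(F)`. -/
theorem eveWinsReach_iff_mem_attr {V : Type} [Fintype V] (A : Arena V) (F : Set V) (v : V) :
    EveWinsReach A F v ↔ v ∈ Attr A F := by
  constructor
  · intro hwin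
    by_contra hv
    obtain ⟨σ, hleg, hσ⟩ := hwin
    classical
    let step : List V → V := fun l =>
      if A.eve (l.getLastD v) then σ l else adamf A F (l.getLastD v)
    let π : ℕ → V := play step v
    have hgl : ∀ n, (hist π n).getLastD v = π n := fun n => hist_getLastD π n v
    have hsucc : ∀ n, π (n + 1) = step (hist π n) := by
      intro n
      show play step v (n + 1) = _
      rw [play_succ, playAux_eq_hist]
    have hedge_eve : ∀ n, A.E (π n) (σ (hist π n)) := by
      intro n
      rw [hist_eq_append]
      exact hleg _ _
    have hstepcase : ∀ n, (A.eve (π n) ∧ π (n + 1) = σ (hist π n)) ∨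
        (¬ A.eve (π n) ∧ π (n + 1) = adamf A F (π n)) := by
      intro n
      have hdef : step (hist π n) =
          if A.eve (π n) then σ (hist π n) else adamf A F (π n) := by
        show (if A.eve ((hist π n).getLastD v) then σ (hist π n)
          else adamf A F ((hist π n).getLastD v)) = _
        rw [hgl n]
      rw [hsucc n, hdef]
      by_cases he : A.eve (π n)
      · exact Or.inl ⟨he, by rw [if_pos he]⟩
      · exact Or.inr ⟨he, by rw [if_neg he]⟩
    have hplay : IsPlay A v π := by
      refine ⟨rfl, fun n => ?_⟩
      rcases hstepcase n with ⟨he, heq⟩ | ⟨he, heq⟩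
      · rw [heq]; exact hedge_eve n
      · rw [heq]; exact adamf_edge A F (π n)
    have hcons : ConsistentEve A σ π := by
      intro n he
      rcases hstepcase n with ⟨_, heq⟩ | ⟨he', _⟩
      · exact heq
      · exact absurd he he'
    have hnot : ∀ n, π n ∉ Attr A F := by
      intro n
      induction n with
      | zero => exact hv
      | succ n ih =>
        rcases hstepcase n with ⟨he, heq⟩ | ⟨he, heq⟩
        · rw [heq]; exact eve_trap ih he (hedge_eve n)
        · rw [heq]; exact adamf_not_mem ih he
    obtain ⟨n, hn⟩ := hσ π hplay hcons
    exact hnot n (Set.mem_iUnion.mpr ⟨0, hn⟩)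
  · intro hv
    obtain ⟨N, hN⟩ := Set.mem_iUnion.mp hv
    refine ⟨fun l => evef A F (l.getLastD v), ?_, ?_⟩
    · intro l u
      show A.E u (evef A F ((l ++ [u]).getLastD v))
      rw [List.getLastD_concat]
      exact evef_edge A F u
    · intro π hplay hcons
      suffices h : ∀ n m, π m ∈ AttrSeq A F n → ∃ j, π j ∈ F by
        exact h N 0 (hplay.1 ▸ hN)
      intro n
      induction n with
      | zero => intro m hm; exact ⟨m, hm⟩
      | succ n ih =>
        intro m hm
        rcases hm with (hm | hm) | hm
        · exact ih m hm
        · by_cases hF : π m ∈ F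
          · exact ⟨m, hF⟩
          have hattr : π m ∈ Attr A F :=
            Set.mem_iUnion.mpr ⟨n + 1, Or.inl (Or.inr hm)⟩
          have hkey := attr_eve_step hattr hm.1 hF
          have hstep : π (m + 1) = evef A F (π m) := by
            have := hcons m hm.1
            rw [this]
            show evef A F ((hist π m).getLastD v) = _
            rw [hist_getLastD]
          have hmem : π (m + 1) ∈ AttrSeq A F (rankA A F (π m) - 1) := by
            rw [hstep]
            exact evef_mem hkey
          have hrle : rankA A F (π m) ≤ n + 1 :=
            rankA_le (Or.inl (Or.inr hm))
          exact ih (m + 1) (attrSeq_mono A F (by omega) hmem)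
        · exact ih (m + 1) (hm.2 (π (m + 1)) (hplay.2 m))
end

section
/- In a generalized reachability game with k reachability sets, if Adam has a winning strategy from v0, then he has a winning strategy from v0 using at most C(k, ⌊k/2⌋) memory states. -/
variable {V M : Type}

namespace AdamAux

open Classical

variable {k : ℕ} (A : Arena V) (F : Fin k → Set V)

/-- prepend a vertex to a play -/
def consSeq (v : V) (p : ℕ → V) : ℕ → V
  | 0 => v
  | n + 1 => p n

lemma hist_zero (π : ℕ → V) : hist π 0 = [π 0] := by
  simp [hist, List.ofFn_succ]

lemma hist_cons (v : V) (p : ℕ → V) (n : ℕ) :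
    hist (consSeq v p) (n + 1) = v :: hist p n := by
  simp only [hist, List.ofFn_succ]
  rfl

/-- Adam can ensure that some target outside `S` is never visited, from `v`. -/
def Wrel (v : V) (S : Finset (Fin k)) : Prop :=
  ∃ τ, Legal A τ ∧ ∀ π, IsPlay A v π → ConsistentAdam A τ π →
    ∃ i ∉ S, ∀ n, π n ∉ F i

noncomputable def Tset (v : V) : Finset (Fin k) :=
  Finset.univ.filter (fun i => v ∈ F i)

lemma mem_Tset {v : V} {i : Fin k} : i ∈ Tset F v ↔ v ∈ F i := by
  simp [Tset]

lemma Wrel_mono {v : V} {S S' : Finset (Fin k)} (hss : S ⊆ S') (h : Wrel A F v S') :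
    Wrel A F v S := by
  obtain ⟨τ, hleg, hwin⟩ := h
  exact ⟨τ, hleg, fun π h1 h2 => by
    obtain ⟨i, hi, hav⟩ := hwin π h1 h2
    exact ⟨i, fun hc => hi (hss hc), hav⟩⟩

lemma Wrel_step {v : V} {S : Finset (Fin k)} (h : Wrel A F v S) :
    (A.eve v → ∀ w, A.E v w → Wrel A F w (S ∪ Tset F v)) ∧
    (¬ A.eve v → ∃ w, A.E v w ∧ Wrel A F w (S ∪ Tset F v)) := by
  obtain ⟨τ, hleg, hwin⟩ := h
  have key : ∀ w, A.E v w → (¬ A.eve v → w = τ [v]) → Wrel A F w (S ∪ Tset F v) := by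
    intro w hvw hwτ
    refine ⟨fun l => τ (v :: l), ?_, ?_⟩
    · intro l u
      have := hleg (v :: l) u
      simpa using this
    · intro p hp hc
      set π := consSeq v p with hπ
      have hp0 : p 0 = w := hp.1
      have hplay : IsPlay A v π := by
        constructor
        · rfl
        · intro n
          cases n with
          | zero => rw [show π 1 = p 0 from rfl, hp0]; exact hvw
          | succ m => exact hp.2 m
      have hcons : ConsistentAdam A τ π := by
        intro n hne
        cases n with
        | zero =>
          have : π 1 = w := by rw [show π 1 = p 0 from rfl, hp0]
          rw [this, hist_zero]
          exact hwτ hne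
        | succ m =>
          have := hc m hne
          rw [show π (m + 2) = p (m + 1) from rfl, this, hist_cons]
      obtain ⟨i, hi, hav⟩ := hwin π hplay hcons
      refine ⟨i, ?_, fun n => hav (n + 1)⟩
      intro hc
      rcases Finset.mem_union.1 hc with h1 | h1
      · exact hi h1
      · exact hav 0 ((mem_Tset F).1 h1)
  constructor
  · intro he w hw
    exact key w hw (fun hne => absurd he hne)
  · intro hne
    refine ⟨τ [v], ?_, key _ ?_ (fun _ => rfl)⟩ <;>
      · have := hleg [] v; simpa using this

/-- builds a play consistent with a legal Adam strategy -/
noncomputable def fstate (τ : List V → V) (v : V) : ℕ → List V × V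
  | 0 => ([], v)
  | n + 1 =>
    let s := fstate τ v n
    (s.1 ++ [s.2],
      if A.eve s.2 then Classical.choose (A.succ_exists s.2) else τ (s.1 ++ [s.2]))

lemma exists_consistent_play (τ : List V → V) (hleg : Legal A τ) (v : V) :
    ∃ π, IsPlay A v π ∧ ConsistentAdam A τ π := by
  set π : ℕ → V := fun n => (fstate A τ v n).2 with hπ
  have hfst : ∀ n, (fstate A τ v n).1 = List.ofFn (fun i : Fin n => π i) := by
    intro n
    induction n with
    | zero => simp [fstate]
    | succ m ih =>
      show (fstate A τ v m).1 ++ [(fstate A τ v m).2] = _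
      rw [ih, List.ofFn_succ']
      simp only [List.concat_eq_append, Fin.coe_castSucc, Fin.val_last]
      rfl
  have hhist : ∀ n, hist π n = (fstate A τ v (n + 1)).1 := by
    intro n
    rw [hfst]
    rfl
  have hsucc : ∀ n, π (n + 1) =
      if A.eve (π n) then Classical.choose (A.succ_exists (π n))
      else τ ((fstate A τ v n).1 ++ [π n]) := fun _ => rfl
  refine ⟨π, ⟨rfl, ?_⟩, ?_⟩
  · intro n
    rw [hsucc]
    split
    · exact Classical.choose_spec (A.succ_exists (π n))
    · exact hleg _ _
  · intro n hne
    rw [hsucc, if_neg hne, hhist]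
    rfl

lemma Wrel_exists_avoid {v : V} {S : Finset (Fin k)} (h : Wrel A F v S) :
    ∃ i, i ∉ S := by
  obtain ⟨τ, hleg, hwin⟩ := h
  obtain ⟨π, h1, h2⟩ := exists_consistent_play A τ hleg v
  obtain ⟨i, hi, -⟩ := hwin π h1 h2
  exact ⟨i, hi⟩

/-- maximal winning sets at a vertex -/
noncomputable def MaxW (v : V) : Finset (Finset (Fin k)) :=
  Finset.univ.filter
    (fun S => Wrel A F v S ∧ ∀ S', Wrel A F v S' → S ⊆ S' → S' = S)

lemma MaxW_wrel {v : V} {S : Finset (Fin k)} (h : S ∈ MaxW A F v) : Wrel A F v S :=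
  ((Finset.mem_filter.1 h).2).1

lemma exists_maxW {v : V} {X : Finset (Fin k)} (h : Wrel A F v X) :
    ∃ S ∈ MaxW A F v, X ⊆ S := by
  classical
  set 𝒜 : Finset (Finset (Fin k)) :=
    Finset.univ.filter (fun S => X ⊆ S ∧ Wrel A F v S) with h𝒜
  have hX : X ∈ 𝒜 := by simp [h𝒜, h]
  obtain ⟨S, hS, hmax⟩ := 𝒜.exists_max_image Finset.card ⟨X, hX⟩
  rw [h𝒜, Finset.mem_filter] at hS
  refine ⟨S, ?_, hS.2.1⟩
  rw [MaxW, Finset.mem_filter]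
  refine ⟨Finset.mem_univ _, hS.2.2, ?_⟩
  intro S' hS' hss
  have hS'mem : S' ∈ 𝒜 := by
    simp only [h𝒜, Finset.mem_filter]
    exact ⟨Finset.mem_univ _, hS.2.1.trans hss, hS'⟩
  exact (Finset.eq_of_subset_of_card_le hss (hmax S' hS'mem)).symm

lemma MaxW_card (v : V) : (MaxW A F v).card ≤ Nat.choose k (k / 2) := by
  classical
  have hanti : IsAntichain (· ⊆ ·) ((MaxW A F v : Set (Finset (Fin k)))) := by
    intro a ha b hb hne hab
    rw [Finset.mem_coe, MaxW, Finset.mem_filter] at ha hb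
    exact hne ((ha.2.2 b hb.2.1 hab).symm)
  have := IsAntichain.sperner hanti
  simpa using this

/-- decode a memory index into a subset, relative to the current vertex -/
noncomputable def decode (v : V) (j : ℕ) : Finset (Fin k) :=
  (MaxW A F v).toList.getD j ∅

lemma decode_surj {v : V} {S : Finset (Fin k)} (h : S ∈ MaxW A F v) :
    ∃ j : Fin (Nat.choose k (k / 2)), decode A F v j = S := by
  have h' : S ∈ (MaxW A F v).toList := Finset.mem_toList.2 h
  obtain ⟨i, hi, hget⟩ := List.mem_iff_getElem.1 h'
  have hlen : (MaxW A F v).toList.length ≤ Nat.choose k (k / 2) := by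
    rw [Finset.length_toList]; exact MaxW_card A F v
  exact ⟨⟨i, lt_of_lt_of_le hi hlen⟩, by rw [decode, List.getD_eq_getElem _ _ hi, hget]⟩


/-- Adam's next-move function. -/
noncomputable def nu (v : V) (j : ℕ) : V :=
  if h : ∃ w, A.E v w ∧ Wrel A F w (decode A F v j ∪ Tset F v) then h.choose
  else (A.succ_exists v).choose

lemma nu_edge (v : V) (j : ℕ) : A.E v (nu A F v j) := by
  unfold nu
  split
  · next h => exact h.choose_spec.1
  · exact (A.succ_exists v).choose_spec

lemma nu_spec {v : V} {j : ℕ}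
    (h : ∃ w, A.E v w ∧ Wrel A F w (decode A F v j ∪ Tset F v)) :
    Wrel A F (nu A F v j) (decode A F v j ∪ Tset F v) := by
  unfold nu
  rw [dif_pos h]
  exact h.choose_spec.2

/-- Adam's memory update function. -/
noncomputable def updFn {nB : ℕ} (j : Fin nB) (v v' : V) : Fin nB :=
  if h : ∃ j' : Fin nB, decode A F v' j' ∈ MaxW A F v' ∧
      decode A F v j ∪ Tset F v ⊆ decode A F v' j' then h.choose else j

lemma updFn_spec {nB : ℕ} {j : Fin nB} {v v' : V}
    (h : ∃ j' : Fin nB, decode A F v' j' ∈ MaxW A F v' ∧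
      decode A F v j ∪ Tset F v ⊆ decode A F v' j') :
    decode A F v' (updFn A F j v v') ∈ MaxW A F v' ∧
      decode A F v j ∪ Tset F v ⊆ decode A F v' (updFn A F j v v') := by
  unfold updFn
  rw [dif_pos h]
  exact h.choose_spec

end AdamAux



/-- if Adam wins a generalized reachability game with `k` sets from `v0`,
he has a winning strategy with at most `C(k, ⌊k/2⌋)` memory states. -/
theorem adam_memory_upper_bound {V : Type} [Fintype V] {k : ℕ}
    (A : Arena V) (F : Fin k → Set V) (v0 : V)
    (h : AdamWinsGenReach A F v0) :
    ∃ (M : Type) (inst : Fintype M) (μ : MemStruct V M) (ν : V → M → V),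
      @Fintype.card M inst ≤ Nat.choose k (k / 2) ∧ AdamWinsWithMem A F v0 μ ν := by
  classical
  obtain ⟨τ0, hleg0, hwin0⟩ := h
  have hW0 : AdamAux.Wrel A F v0 ∅ := by
    refine ⟨τ0, hleg0, fun π h1 h2 => ?_⟩
    have hng := hwin0 π h1 h2
    unfold GenReach at hng
    push_neg at hng
    obtain ⟨i, hi⟩ := hng
    exact ⟨i, Finset.notMem_empty i, hi⟩
  set nB := Nat.choose k (k / 2) with hnB
  obtain ⟨S0, hS0mem, -⟩ := AdamAux.exists_maxW A F hW0
  obtain ⟨j0, hj0⟩ := AdamAux.decode_surj A F hS0mem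
  set μ : MemStruct V (Fin nB) := ⟨j0, fun j v v' => AdamAux.updFn A F j v v'⟩ with hμ
  set ν : V → Fin nB → V := fun v j => AdamAux.nu A F v j with hν
  refine ⟨Fin nB, inferInstance, μ, ν, by simp, ?_, ?_⟩
  · intro v m
    exact AdamAux.nu_edge A F v m
  · intro π hplay hcons hGR
    set mt := memTrace μ π with hmt
    have Inv : ∀ n, AdamAux.decode A F (π n) (mt n) ∈ AdamAux.MaxW A F (π n) ∧
        ∀ m, m < n → AdamAux.Tset F (π m) ⊆ AdamAux.decode A F (π n) (mt n) := by
      intro n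
      induction n with
      | zero =>
        have h0 : mt 0 = j0 := rfl
        rw [h0, hplay.1, hj0]
        exact ⟨hS0mem, fun m hm => absurd hm (Nat.not_lt_zero m)⟩
      | succ n ih =>
        obtain ⟨hmem, hpast⟩ := ih
        have hWS : AdamAux.Wrel A F (π n) (AdamAux.decode A F (π n) (mt n)) :=
          AdamAux.MaxW_wrel A F hmem
        have hnext : AdamAux.Wrel A F (π (n + 1))
            (AdamAux.decode A F (π n) (mt n) ∪ AdamAux.Tset F (π n)) := by
          by_cases he : A.eve (π n)
          · exact (AdamAux.Wrel_step A F hWS).1 he _ (hplay.2 n)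
          · have hex := (AdamAux.Wrel_step A F hWS).2 he
            have hν' := hcons n he
            rw [hν']
            exact AdamAux.nu_spec A F hex
        have hupdex : ∃ j' : Fin nB, AdamAux.decode A F (π (n + 1)) j' ∈
            AdamAux.MaxW A F (π (n + 1)) ∧
            AdamAux.decode A F (π n) (mt n) ∪ AdamAux.Tset F (π n) ⊆
              AdamAux.decode A F (π (n + 1)) j' := by
          obtain ⟨S', hS'mem, hsub⟩ := AdamAux.exists_maxW A F hnext
          obtain ⟨j', hj'⟩ := AdamAux.decode_surj A F hS'mem
          exact ⟨j', by rw [hj']; exact ⟨hS'mem, hsub⟩⟩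
        have hstep : mt (n + 1) = AdamAux.updFn A F (mt n) (π n) (π (n + 1)) := rfl
        rw [hstep]
        obtain ⟨h1, h2⟩ := AdamAux.updFn_spec A F hupdex
        refine ⟨h1, fun m hm => ?_⟩
        rcases Nat.lt_succ_iff_lt_or_eq.1 hm with hm' | hm'
        · exact ((hpast m hm').trans Finset.subset_union_left).trans h2
        · rw [hm']
          exact Finset.subset_union_right.trans h2
    set g : Fin k → ℕ := fun i => (hGR i).choose with hg
    set N := Finset.univ.sup g + 1 with hN
    obtain ⟨hmem, hpast⟩ := Inv N
    obtain ⟨i, hiS⟩ := AdamAux.Wrel_exists_avoid A F (AdamAux.MaxW_wrel A F hmem)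
    apply hiS
    apply hpast (g i)
      (Nat.lt_succ_of_le (Finset.le_sup (f := g) (Finset.mem_univ i)))
    exact (AdamAux.mem_Tset F).2 (hGR i).choose_spec
end

section
/- For every k ≥ 1, there exists a generalized reachability game with k reachability sets in which Eve has a winning strategy from the initial vertex, but every winning strategy for Eve requires at least 2^k − 1 memory states. -/
variable {V M : Type}

namespace FlowerLB

abbrev FV (k : ℕ) := Option (Fin k × Fin 3)

variable {k : ℕ}

def pet (i : Fin k) : FV k := some (i, 0)
def gd (i : Fin k) : FV k := some (i, 1)
def snk (i : Fin k) : FV k := some (i, 2)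

def fE : FV k → FV k → Prop
  | none, w => ∃ i, w = pet i
  | some (i, j), w =>
      if j = 0 then w = gd i ∨ w = snk i
      else if j = 1 then w = none
      else w = snk i

def fArena (i0 : Fin k) : Arena (FV k) where
  E := fE
  eve v := ∃ i : Fin k, v = pet i
  succ_exists v := by
    match v with
    | none => exact ⟨pet i0, ⟨i0, rfl⟩⟩
    | some (i, j) =>
      by_cases h0 : j = 0
      · exact ⟨gd i, by simp [fE, h0]⟩
      · by_cases h1 : j = 1
        · exact ⟨none, by simp [fE, h0, h1]⟩
        · exact ⟨snk i, by simp [fE, h0, h1]⟩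

lemma fE_none {w : FV k} (h : fE none w) : ∃ i, w = pet i := h

lemma fE_pet {i : Fin k} {w : FV k} (h : fE (pet i) w) : w = gd i ∨ w = snk i := by
  simpa [fE, pet] using h

lemma fE_gd {i : Fin k} {w : FV k} (h : fE (gd i) w) : w = none := by
  simpa [fE, gd] using h

lemma fE_snk {i : Fin k} {w : FV k} (h : fE (snk i) w) : w = snk i := by
  simpa [fE, snk] using h

lemma fin3_cases : ∀ (j : Fin 3), j = 0 ∨ j = 1 ∨ j = 2 := by decide

lemma fE_into_snk {v : FV k} {j : Fin k} (h : fE v (snk j)) : v = pet j ∨ v = snk j := by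
  match v with
  | none => obtain ⟨i, hi⟩ := h; simp [pet, snk] at hi
  | some (i, j') =>
    rcases fin3_cases j' with h0 | h0 | h0 <;> subst h0
    · rcases (by simpa [fE] using h : snk j = gd i ∨ snk j = snk i) with h' | h'
      · simp [gd, snk] at h'
      · left; simp [snk] at h'; simp [pet, h']
    · simp [fE] at h; simp [snk] at h
    · have := (by simpa [fE] using h : snk j = snk i)
      simp [snk] at this
      right; simp [snk, this]

def fF (i : Fin k) : Set (FV k) := {v | v = gd i ∨ ∃ j, j ≠ i ∧ v = snk j}

lemma pet_ne_gd {i j : Fin k} : pet i ≠ gd j := by simp [pet, gd]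
lemma gd_ne_snk {i j : Fin k} : gd i ≠ snk j := by simp [gd, snk]
lemma none_notin_fF {i : Fin k} : (none : FV k) ∉ fF i := by
  simp [fF, gd, snk]
lemma pet_notin_fF {i j : Fin k} : pet j ∉ fF i := by
  simp [fF, pet, gd, snk]
lemma gd_mem_fF_iff {i j : Fin k} : gd j ∈ fF i ↔ j = i := by
  simp [fF, gd, snk]
lemma snk_mem_fF_iff {i j : Fin k} : snk j ∈ fF i ↔ j ≠ i := by
  simp [fF, gd, snk]


-- ### history lemmas

lemma hist_zero {V : Type} (π : ℕ → V) : hist π 0 = [π 0] := by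
  simp [hist, List.ofFn_succ]

lemma hist_succ {V : Type} (π : ℕ → V) (n : ℕ) :
    hist π (n + 1) = hist π n ++ [π (n + 1)] := by
  simp only [hist]
  rw [List.ofFn_succ' (f := fun i : Fin (n + 2) => π i)]
  simp [List.concat_eq_append]

lemma hist_getLast {V : Type} (π : ℕ → V) (n : ℕ) :
    (hist π n).getLast? = some (π n) := by
  cases n with
  | zero => simp [hist_zero]
  | succ n => rw [hist_succ]; simp

lemma hist_dropLast {V : Type} (π : ℕ → V) (n : ℕ) :
    (hist π (n + 1)).dropLast = hist π n := by
  rw [hist_succ]; simp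

lemma mem_hist_dropLast {V : Type} (π : ℕ → V) (n : ℕ) (v : V) :
    v ∈ (hist π n).dropLast ↔ ∃ t, t < n ∧ π t = v := by
  cases n with
  | zero =>
    rw [hist_zero]
    simp
  | succ n =>
    rw [hist_dropLast]
    simp only [hist, List.mem_ofFn]
    constructor
    · rintro ⟨i, hi⟩; exact ⟨i, i.isLt, hi⟩
    · rintro ⟨t, ht, hv⟩; exact ⟨⟨t, ht⟩, hv⟩

-- ### Part 1: Eve's winning history-based strategy

def stepf (i0 : Fin k) : FV k → List (FV k) → FV k
  | none, _ => pet i0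
  | some (i, j), h =>
      if j = 0 then (if gd i ∈ h then snk i else gd i)
      else if j = 1 then none
      else snk i

def sigma0 (i0 : Fin k) (l : List (FV k)) : FV k :=
  match l.getLast? with
  | none => none
  | some v => stepf i0 v l.dropLast

lemma sigma0_legal (i0 : Fin k) : Legal (fArena i0) (sigma0 i0) := by
  intro l v
  have h1 : sigma0 i0 (l ++ [v]) = stepf i0 v l := by
    simp [sigma0, List.getLast?_concat]
  rw [h1]
  show fE v (stepf i0 v l)
  match v with
  | none => exact ⟨i0, rfl⟩
  | some (i, j) =>
    rcases fin3_cases j with h0 | h0 | h0 <;> subst h0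
    · by_cases hg : gd i ∈ l <;> simp [stepf, fE, hg]
    · simp [stepf, fE]
    · simp [stepf, fE]

lemma sigma0_eval (i0 : Fin k) (π : ℕ → FV k) (n : ℕ) :
    sigma0 i0 (hist π n) = stepf i0 (π n) ((hist π n).dropLast) := by
  simp [sigma0, hist_getLast]

theorem part1 (i0 : Fin k) : EveWinsGenReach (fArena i0) fF none := by
  refine ⟨sigma0 i0, sigma0_legal i0, ?_⟩
  rintro π ⟨h0, hE⟩ hcons
  by_cases hsnk : ∃ n, ∃ j : Fin k, π n = snk j
  · -- some sink is reached; take minimal time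
    classical
    let P : ℕ → Prop := fun n => ∃ j : Fin k, π n = snk j
    have hP : ∃ n, P n := hsnk
    let n0 := Nat.find hP
    obtain ⟨j, hj⟩ : P n0 := Nat.find_spec hP
    have hn0 : 1 ≤ n0 := by
      rcases Nat.eq_zero_or_pos n0 with h | h
      · exfalso; rw [h] at hj; rw [h0] at hj; simp [snk] at hj
      · exact h
    obtain ⟨m, hm⟩ : ∃ m, n0 = m + 1 := ⟨n0 - 1, by omega⟩
    have hedge : fE (π m) (π n0) := by rw [hm]; exact hE m
    rw [hj] at hedge
    have hpm : π m = pet j := by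
      rcases fE_into_snk hedge with h | h
      · exact h
      · exfalso
        exact Nat.find_min hP (by omega : m < n0) ⟨j, h⟩
    have heve : (fArena i0).eve (π m) := ⟨j, hpm⟩
    have hmove := hcons m heve
    rw [sigma0_eval, hpm] at hmove
    have hgood : gd j ∈ (hist π m).dropLast := by
      by_contra hg
      rw [show stepf i0 (pet j) ((hist π m).dropLast) = if gd j ∈ (hist π m).dropLast then snk j else gd j from rfl] at hmove
      rw [if_neg hg] at hmove
      rw [← hm] at hmove
      rw [hj] at hmove
      exact gd_ne_snk hmove.symm
    obtain ⟨t, ht, hgt⟩ := (mem_hist_dropLast π m (gd j)).1 hgood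
    intro i
    by_cases hij : j = i
    · exact ⟨t, by rw [hgt]; exact (gd_mem_fF_iff).2 hij⟩
    · exact ⟨n0, by rw [hj]; exact (snk_mem_fF_iff).2 hij⟩
  · -- no sink is ever reached : derive a contradiction
    exfalso
    push_neg at hsnk
    -- the play has period-3 structure
    have hshape : ∀ t : ℕ, π (3 * t) = none ∧
        ∃ i : Fin k, π (3 * t + 1) = pet i ∧ π (3 * t + 2) = gd i := by
      intro t
      induction t with
      | zero =>
        refine ⟨by simpa using h0, ?_⟩
        have h1 : fE (π 0) (π 1) := hE 0
        rw [h0] at h1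
        obtain ⟨i, hi⟩ := h1
        refine ⟨i, by simpa using hi, ?_⟩
        have h2 : fE (π 1) (π 2) := hE 1
        rw [show π 1 = pet i by simpa using hi] at h2
        rcases fE_pet h2 with h | h
        · simpa using h
        · exact absurd h (by have := hsnk 2 i; simpa using this)
      | succ t ih =>
        obtain ⟨hh, i, hp, hg⟩ := ih
        have h3 : fE (π (3 * t + 2)) (π (3 * t + 3)) := hE _
        rw [hg] at h3
        have hh' : π (3 * t + 3) = none := fE_gd h3
        have e1 : 3 * (t + 1) = 3 * t + 3 := by ring
        refine ⟨by rw [e1]; exact hh', ?_⟩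
        have h4 : fE (π (3 * t + 3)) (π (3 * t + 4)) := hE _
        rw [hh'] at h4
        obtain ⟨i', hi'⟩ := h4
        refine ⟨i', by rw [e1, show 3 * t + 3 + 1 = 3 * t + 4 from rfl]; exact hi', ?_⟩
        have h5 : fE (π (3 * t + 4)) (π (3 * t + 5)) := hE _
        rw [hi'] at h5
        rcases fE_pet h5 with h | h
        · rw [e1]; exact h
        · exact absurd h (hsnk _ i')
    -- the petal chosen in round t
    choose hh cc hcp hcg using hshape
    obtain ⟨t1, t2, hne, hceq⟩ := Finite.exists_ne_map_eq_of_infinite cc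
    -- wlog t1 < t2
    wlog hlt : t1 < t2 generalizing t1 t2
    · exact this t2 t1 hne.symm hceq.symm (by omega)
    -- at time 3 * t2 + 1 Eve must move to the sink
    have heve : (fArena i0).eve (π (3 * t2 + 1)) := ⟨cc t2, hcp t2⟩
    have hmove := hcons (3 * t2 + 1) heve
    rw [sigma0_eval, hcp t2] at hmove
    have hgood : gd (cc t2) ∈ (hist π (3 * t2 + 1)).dropLast := by
      rw [mem_hist_dropLast]
      exact ⟨3 * t1 + 2, by omega, by rw [hcg t1, hceq]⟩
    rw [show stepf i0 (pet (cc t2)) ((hist π (3 * t2 + 1)).dropLast)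
        = if gd (cc t2) ∈ (hist π (3 * t2 + 1)).dropLast then snk (cc t2) else gd (cc t2) from rfl,
      if_pos hgood] at hmove
    exact hsnk (3 * t2 + 2) (cc t2) hmove

-- ### Part 2: lower bound machinery

section Part2

variable {M : Type} (μ : MemStruct (FV k) M) (ν : FV k → M → FV k)

/-- The set of petals at which Eve would move to the sink, from heart-memory `m`. -/
def sigF (m : M) : Finset (Fin k) :=
  Finset.univ.filter fun i => ν (pet i) (μ.upd m none (pet i)) = snk i

lemma mem_sigF {m : M} {i : Fin k} :
    i ∈ sigF μ ν m ↔ ν (pet i) (μ.upd m none (pet i)) = snk i := by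
  simp [sigF]

/-- Heart-memory update after a full loop heart → petal i → good i → heart. -/
def stepM (m : M) (i : Fin k) : M :=
  μ.upd (μ.upd (μ.upd m none (pet i)) (pet i) (gd i)) (gd i) none

def memAt (w : List (Fin k)) : M := w.foldl (stepM μ) μ.m0

lemma memAt_snoc (w : List (Fin k)) (i : Fin k) :
    memAt μ (w ++ [i]) = stepM μ (memAt μ w) i := by
  simp [memAt, List.foldl_append]

/-- The run when Adam plays `c n` if the play is at the heart at time `n`,
and Eve plays `ν`. -/
def run (c : ℕ → Fin k) : ℕ → FV k × M
  | 0 => (none, μ.m0)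
  | n + 1 =>
      let p := run c n
      let v' : FV k := match p.1 with
        | none => pet (c n)
        | some (i, j) => if j = 0 then ν (pet i) p.2 else if j = 1 then none else snk i
      (v', μ.upd p.2 p.1 v')

def πrun (c : ℕ → Fin k) : ℕ → FV k := fun n => (run μ ν c n).1

lemma run_step_heart {c : ℕ → Fin k} {n : ℕ} {m : M} (h : run μ ν c n = (none, m)) :
    run μ ν c (n + 1) = (pet (c n), μ.upd m none (pet (c n))) := by
  simp [run, h]

lemma run_step_pet {c : ℕ → Fin k} {n : ℕ} {m : M} {i : Fin k}
    (h : run μ ν c n = (pet i, m)) :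
    run μ ν c (n + 1) = (ν (pet i) m, μ.upd m (pet i) (ν (pet i) m)) := by
  simp [run, h, pet]

lemma run_step_gd {c : ℕ → Fin k} {n : ℕ} {m : M} {i : Fin k}
    (h : run μ ν c n = (gd i, m)) :
    run μ ν c (n + 1) = (none, μ.upd m (gd i) none) := by
  simp [run, h, gd]

lemma run_step_snk {c : ℕ → Fin k} {n : ℕ} {m : M} {i : Fin k}
    (h : run μ ν c n = (snk i, m)) :
    run μ ν c (n + 1) = (snk i, μ.upd m (snk i) (snk i)) := by
  simp [run, h, snk]

lemma run_memTrace (c : ℕ → Fin k) : ∀ n, memTrace μ (πrun μ ν c) n = (run μ ν c n).2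
  | 0 => rfl
  | n + 1 => by
      have ih := run_memTrace c n
      show μ.upd (memTrace μ (πrun μ ν c) n) (πrun μ ν c n) (πrun μ ν c (n + 1))
          = (run μ ν c (n + 1)).2
      rw [ih]
      rfl

lemma run_isPlay (i0 : Fin k) (hleg : MemLegal (fArena i0) ν) (c : ℕ → Fin k) :
    IsPlay (fArena i0) none (πrun μ ν c) := by
  refine ⟨rfl, fun n => ?_⟩
  show fE (πrun μ ν c n) (πrun μ ν c (n + 1))
  cases hr : run μ ν c n with
  | mk v m =>
    have hv : πrun μ ν c n = v := by simp [πrun, hr]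
    rw [hv]
    match v, hr with
    | none, hr =>
        rw [show πrun μ ν c (n+1) = pet (c n) by simp [πrun, run_step_heart μ ν hr]]
        exact ⟨c n, rfl⟩
    | some (i, j), hr =>
        rcases fin3_cases j with h0 | h0 | h0 <;> subst h0
        · rw [show πrun μ ν c (n+1) = ν (pet i) m by simp [πrun, run_step_pet μ ν hr]]
          exact hleg (pet i) m
        · rw [show πrun μ ν c (n+1) = none by simp [πrun, run_step_gd μ ν hr]]
          simp [fE, gd]
        · rw [show πrun μ ν c (n+1) = snk i by simp [πrun, run_step_snk μ ν hr]]
          simp [fE, snk]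

lemma run_consEve (i0 : Fin k) (c : ℕ → Fin k) :
    MemConsistentEve (fArena i0) μ ν (πrun μ ν c) := by
  rintro n ⟨i, hi⟩
  cases hr : run μ ν c n with
  | mk v m =>
    have hv : v = pet i := by
      have : πrun μ ν c n = v := by simp [πrun, hr]
      rw [← this, hi]
    subst hv
    rw [hi]
    rw [show memTrace μ (πrun μ ν c) n = m by rw [run_memTrace]; simp [hr]]
    simp [πrun, run_step_pet μ ν hr]

/-- Adam's choice list determined by a choice sequence. -/
def cw (c : ℕ → Fin k) (t : ℕ) : List (Fin k) := (List.range t).map fun s => c (3 * s)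

lemma cw_succ (c : ℕ → Fin k) (t : ℕ) : cw c (t + 1) = cw c t ++ [c (3 * t)] := by
  simp [cw, List.range_succ]

lemma nu_good (i0 : Fin k) (hleg : MemLegal (fArena i0) ν) {m : M} {i : Fin k}
    (h : i ∉ sigF μ ν m) : ν (pet i) (μ.upd m none (pet i)) = gd i := by
  rcases fE_pet (hleg (pet i) (μ.upd m none (pet i))) with h' | h'
  · exact h'
  · exact absurd ((mem_sigF μ ν).2 h') h

lemma run3 (i0 : Fin k) (hleg : MemLegal (fArena i0) ν) (c : ℕ → Fin k) (t : ℕ)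
    (hc : ∀ s, s < t → c (3 * s) ∉ sigF μ ν (memAt μ (cw c s))) :
    run μ ν c (3 * t) = (none, memAt μ (cw c t)) := by
  induction t with
  | zero => simp [run, cw, memAt]
  | succ t ih =>
    have h3t := ih (fun s hs => hc s (by omega))
    have r1 := run_step_heart μ ν h3t
    have hg := nu_good μ ν i0 hleg (hc t (by omega))
    have r2 := run_step_pet μ ν r1
    rw [hg] at r2
    have r3 := run_step_gd μ ν r2
    have e1 : 3 * (t + 1) = 3 * t + 1 + 1 + 1 := by ring
    rw [e1, r3, cw_succ, memAt_snoc]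
    rfl

lemma sigF_subset (i0 : Fin k) (hleg : MemLegal (fArena i0) ν)
    (hwin : ∀ π, IsPlay (fArena i0) none π → MemConsistentEve (fArena i0) μ ν π → GenReach fF π)
    (w : List (Fin k))
    (hW : ∀ s (h : s < w.length), w[s] ∉ sigF μ ν (memAt μ (w.take s)))
    {i : Fin k} (hi : i ∈ sigF μ ν (memAt μ w)) : i ∈ w := by
  classical
  by_contra hnot
  set L := w.length with hL
  set c : ℕ → Fin k := fun n => if h : n / 3 < w.length then w[n / 3] else i with hc_def
  have hdiv : ∀ s : ℕ, 3 * s / 3 = s := fun s => by omega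
  have hcs : ∀ s (h : s < w.length), c (3 * s) = w[s] := by
    intro s h
    simp only [hc_def, hdiv]
    exact dif_pos h
  have hcL : c (3 * L) = i := by
    simp only [hc_def, hdiv]
    exact dif_neg (by omega)
  have hcw : ∀ s, s ≤ L → cw c s = w.take s := by
    intro s
    induction s with
    | zero => intro _; simp [cw]
    | succ s ih =>
      intro hs
      have hsL : s < w.length := by omega
      rw [cw_succ, ih (by omega), hcs s hsL, List.take_concat_get']
  have hcomp : ∀ s, s < L → c (3 * s) ∉ sigF μ ν (memAt μ (cw c s)) := by
    intro s hs
    rw [hcw s hs.le, hcs s hs]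
    exact hW s hs
  have h3L := run3 μ ν i0 hleg c L hcomp
  rw [hcw L le_rfl, List.take_length] at h3L
  have r1 := run_step_heart μ ν h3L
  rw [hcL] at r1
  have hsnkmv : ν (pet i) (μ.upd (memAt μ w) none (pet i)) = snk i := (mem_sigF μ ν).1 hi
  have r2 := run_step_pet μ ν r1
  rw [hsnkmv] at r2
  have hforever : ∀ r, ∃ m', run μ ν c (3 * L + 1 + 1 + r) = (snk i, m') := by
    intro r
    induction r with
    | zero => exact ⟨_, r2⟩
    | succ r ih =>
      obtain ⟨m', hm'⟩ := ih
      exact ⟨_, run_step_snk μ ν hm'⟩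
  obtain ⟨n, hn⟩ := hwin (πrun μ ν c) (run_isPlay μ ν i0 hleg c) (run_consEve μ ν i0 c) i
  by_cases h1 : 3 * L + 2 ≤ n
  · obtain ⟨r, hr⟩ : ∃ r, n = 3 * L + 1 + 1 + r := ⟨n - (3 * L + 2), by omega⟩
    obtain ⟨m', hm'⟩ := hforever r
    rw [hr, show πrun μ ν c (3 * L + 1 + 1 + r) = snk i by simp [πrun, hm']] at hn
    exact (snk_mem_fF_iff.1 hn) rfl
  · push_neg at h1
    set s := n / 3 with hs_def
    have hsL : s ≤ L := by omega
    have h3s := run3 μ ν i0 hleg c s (fun s' hs' => hcomp s' (by omega))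
    have hs3 : n = 3 * s ∨ n = 3 * s + 1 ∨ n = 3 * s + 2 := by omega
    rcases hs3 with h | h | h
    · rw [h, show πrun μ ν c (3 * s) = none by simp [πrun, h3s]] at hn
      exact none_notin_fF hn
    · have r1' := run_step_heart μ ν h3s
      rw [h, show πrun μ ν c (3 * s + 1) = pet (c (3 * s)) by simp [πrun, r1']] at hn
      exact pet_notin_fF hn
    · have hsL' : s < L := by omega
      have r1' := run_step_heart μ ν h3s
      have hg := nu_good μ ν i0 hleg (hcomp s hsL')
      have r2' := run_step_pet μ ν r1'
      rw [hg] at r2'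
      rw [h, show πrun μ ν c (3 * s + 2) = gd (c (3 * s)) by simp [πrun, r2']] at hn
      have : c (3 * s) = i := gd_mem_fF_iff.1 hn
      rw [hcs s hsL'] at this
      exact hnot (this ▸ List.getElem_mem hsL')

lemma exists_terminal (i0 : Fin k) (hleg : MemLegal (fArena i0) ν)
    (hwin : ∀ π, IsPlay (fArena i0) none π → MemConsistentEve (fArena i0) μ ν π → GenReach fF π)
    (S : Finset (Fin k)) (hS : S ≠ Finset.univ) :
    ∃ w : List (Fin k),
      (∀ s (h : s < w.length), w[s] ∉ sigF μ ν (memAt μ (w.take s))) ∧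
      (∀ j ∈ w, j ∈ S) ∧ S ⊆ sigF μ ν (memAt μ w) := by
  classical
  by_contra H
  push_neg at H
  set P := {w : List (Fin k) //
      (∀ s (h : s < w.length), w[s] ∉ sigF μ ν (memAt μ (w.take s))) ∧ ∀ j ∈ w, j ∈ S} with hP
  have hpick : ∀ p : P, ∃ i, i ∈ S ∧ i ∉ sigF μ ν (memAt μ p.val) := by
    intro p
    have := H p.val p.2.1 p.2.2
    exact Finset.not_subset.1 this
  set pick : P → Fin k := fun p => (hpick p).choose with hpick_def
  have hpickS : ∀ p, pick p ∈ S := fun p => (hpick p).choose_spec.1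
  have hpickN : ∀ p, pick p ∉ sigF μ ν (memAt μ p.val) := fun p => (hpick p).choose_spec.2
  set nxt : P → P := fun p => ⟨p.val ++ [pick p], by
    constructor
    · intro s h
      rw [List.length_append, List.length_singleton] at h
      by_cases hs : s < p.val.length
      · rw [List.getElem_append_left hs,
          List.take_append_of_le_length (by omega : s ≤ p.val.length)]
        exact p.2.1 s hs
      · have hse : s = p.val.length := by omega
        subst hse
        rw [List.take_append_of_le_length le_rfl, List.take_length]
        have hg : (p.val ++ [pick p])[p.val.length]'(by simp) = pick p := by simp
        rw [hg]
        exact hpickN p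
    · intro j hj
      rcases List.mem_append.1 hj with h | h
      · exact p.2.2 j h
      · rw [List.mem_singleton.1 h]; exact hpickS p⟩ with hnxt
  set ws : ℕ → P := fun t => nxt^[t] ⟨[], by constructor <;> simp⟩ with hws_def
  have hws : ∀ t, ws (t + 1) = nxt (ws t) := by
    intro t
    simp only [hws_def]
    exact Function.iterate_succ_apply' nxt _ _
  set c : ℕ → Fin k := fun n => pick (ws (n / 3)) with hc_def
  have hdiv : ∀ s : ℕ, 3 * s / 3 = s := fun s => by omega
  have hcw : ∀ t, cw c t = (ws t).val := by
    intro t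
    induction t with
    | zero => simp [cw, hws_def]
    | succ t ih =>
      rw [cw_succ, ih, hws t]
      simp only [hc_def, hdiv]
      rfl
  have hctot : ∀ s, c (3 * s) ∉ sigF μ ν (memAt μ (cw c s)) := by
    intro s
    rw [hcw s]
    simp only [hc_def, hdiv]
    exact hpickN (ws s)
  obtain ⟨j0, hj0⟩ : ∃ j0, j0 ∉ S := by
    by_contra hall
    push_neg at hall
    exact hS (Finset.eq_univ_iff_forall.2 hall)
  obtain ⟨n, hn⟩ := hwin (πrun μ ν c) (run_isPlay μ ν i0 hleg c) (run_consEve μ ν i0 c) j0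
  set s := n / 3 with hs_def
  have h3s := run3 μ ν i0 hleg c s (fun s' _ => hctot s')
  have hs3 : n = 3 * s ∨ n = 3 * s + 1 ∨ n = 3 * s + 2 := by omega
  rcases hs3 with h | h | h
  · rw [h, show πrun μ ν c (3 * s) = none by simp [πrun, h3s]] at hn
    exact none_notin_fF hn
  · have r1' := run_step_heart μ ν h3s
    rw [h, show πrun μ ν c (3 * s + 1) = pet (c (3 * s)) by simp [πrun, r1']] at hn
    exact pet_notin_fF hn
  · have r1' := run_step_heart μ ν h3s
    have hg := nu_good μ ν i0 hleg (hctot s)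
    have r2' := run_step_pet μ ν r1'
    rw [hg] at r2'
    rw [h, show πrun μ ν c (3 * s + 2) = gd (c (3 * s)) by simp [πrun, r2']] at hn
    have hci : c (3 * s) = j0 := gd_mem_fF_iff.1 hn
    apply hj0
    rw [← hci]
    simp only [hc_def, hdiv]
    exact hpickS (ws s)

lemma exists_state (i0 : Fin k) (hleg : MemLegal (fArena i0) ν)
    (hwin : ∀ π, IsPlay (fArena i0) none π → MemConsistentEve (fArena i0) μ ν π → GenReach fF π)
    (S : Finset (Fin k)) (hS : S ≠ Finset.univ) :
    ∃ m : M, sigF μ ν m = S := by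
  obtain ⟨w, hW, hwS, hSsub⟩ := exists_terminal μ ν i0 hleg hwin S hS
  refine ⟨memAt μ w, Finset.Subset.antisymm ?_ hSsub⟩
  intro i hi
  exact hwS i (sigF_subset μ ν i0 hleg hwin w hW hi)

end Part2


end FlowerLB

/-- for every `k ≥ 1` there is a generalized reachability game with `k`
reachability sets which Eve wins, but where every winning strategy for Eve needs at
least `2^k - 1` memory states. -/
theorem eve_memory_lower_bound (k : ℕ) (hk : 1 ≤ k) :
    ∃ (V : Type) (instV : Fintype V) (A : Arena V) (F : Fin k → Set V) (v0 : V),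
      EveWinsGenReach A F v0 ∧
      ∀ (M : Type) (inst : Fintype M) (μ : MemStruct V M) (ν : V → M → V),
        EveWinsWithMem A F v0 μ ν → 2 ^ k - 1 ≤ @Fintype.card M inst := by
  classical
  have i0 : Fin k := ⟨0, hk⟩
  refine ⟨FlowerLB.FV k, inferInstance, FlowerLB.fArena i0, FlowerLB.fF, none,
    FlowerLB.part1 i0, ?_⟩
  intro M inst μ ν hwm
  obtain ⟨hleg, hwin⟩ := hwm
  haveI := inst
  have key : ∀ S : Finset (Fin k), S ≠ Finset.univ → ∃ m : M, FlowerLB.sigF μ ν m = S :=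
    fun S hS => FlowerLB.exists_state μ ν i0 hleg hwin S hS
  let g : {S : Finset (Fin k) // S ≠ Finset.univ} → M := fun S => (key S.1 S.2).choose
  have hg : ∀ S, FlowerLB.sigF μ ν (g S) = S.1 := fun S => (key S.1 S.2).choose_spec
  have hinj : Function.Injective g := by
    intro S T h
    apply Subtype.ext
    rw [← hg S, ← hg T, h]
  have hcard := Fintype.card_le_of_injective g hinj
  have h1 : Fintype.card {S : Finset (Fin k) // S ≠ Finset.univ} = 2 ^ k - 1 := by
    have h2 : Fintype.card {S : Finset (Fin k) // S = Finset.univ} = 1 :=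
      Fintype.card_subtype_eq _
    have h3 := Fintype.card_subtype_compl (fun S : Finset (Fin k) => S = Finset.univ)
    have h4 : Fintype.card (Finset (Fin k)) = 2 ^ k := by
      rw [Fintype.card_finset, Fintype.card_fin]
    rw [h2, h4] at h3
    convert h3 using 2
  have hMM : @Fintype.card M inst = Fintype.card M :=
    @Fintype.card_congr M M inst _ (Equiv.refl M)
  omega
end

section
/- For every odd k = 2p + 1, there exists a generalized reachability game with k reachability sets in which Adam wins from the initial vertex, but every winning strategy for Adam requires at least C(k, p) memory states. -/
variable {V M : Type}

namespace AdamLB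

abbrev SP (p : ℕ) := {S : Finset (Fin (2*p+1)) // S.card = p}
abbrev SU (p : ℕ) := {U : Finset (Fin (2*p+1)) // U.card ≤ p}

inductive Vtx (p : ℕ) : Type where
  | v0 : Vtx p
  | e : SP p → Vtx p
  | d : Vtx p
  | b : SP p → Vtx p
  | c : SU p → Vtx p
  deriving DecidableEq, Fintype

variable {p : ℕ}

inductive Edge : Vtx p → Vtx p → Prop where
  | v0e (S) : Edge .v0 (.e S)
  | ed (S) : Edge (.e S) .d
  | db (S) : Edge .d (.b S)
  | bc (S U) : Edge (.b S) (.c U)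
  | cc (U) : Edge (.c U) (.c U)

def S0 (p : ℕ) : SP p :=
  ⟨(Finset.univ : Finset (Fin p)).image (Fin.castLE (by omega)), by
    rw [Finset.card_image_of_injective _ (Fin.castLE_injective _)]; simp⟩

def U0 (p : ℕ) : SU p := ⟨∅, by simp⟩

def defaultSucc : Vtx p → Vtx p
  | .v0 => .e (S0 p)
  | .e _ => .d
  | .d => .b (S0 p)
  | .b _ => .c (U0 p)
  | .c U => .c U

lemma edge_defaultSucc (v : Vtx p) : Edge v (defaultSucc v) := by
  cases v <;> simp only [defaultSucc] <;> constructor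

def Ar (p : ℕ) : Arena (Vtx p) where
  E := Edge
  eve := fun x => x ≠ .d
  succ_exists := fun v => ⟨defaultSucc v, edge_defaultSucc v⟩

def colors : Vtx p → Finset (Fin (2*p+1))
  | .e S => S.1
  | .b S => S.1
  | .c U => U.1
  | _ => ∅

def Fam (p : ℕ) : Fin (2*p+1) → Set (Vtx p) := fun i => {x | i ∈ colors x}

lemma edge_v0 {x : Vtx p} (h : Edge Vtx.v0 x) : ∃ S, x = Vtx.e S := by
  cases h; exact ⟨_, rfl⟩
lemma edge_e {S} {x : Vtx p} (h : Edge (Vtx.e S) x) : x = Vtx.d := by cases h; rfl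
lemma edge_d {x : Vtx p} (h : Edge Vtx.d x) : ∃ S, x = Vtx.b S := by
  cases h; exact ⟨_, rfl⟩
lemma edge_b {S} {x : Vtx p} (h : Edge (Vtx.b S) x) : ∃ U, x = Vtx.c U := by
  cases h; exact ⟨_, rfl⟩
lemma edge_c {U} {x : Vtx p} (h : Edge (Vtx.c U) x) : x = Vtx.c U := by cases h; rfl

/-- Adam's full-history winning strategy. -/
def tau (p : ℕ) (l : List (Vtx p)) : Vtx p :=
  match l with
  | [_, Vtx.e S, Vtx.d] => Vtx.b S
  | l => l.getLast?.elim Vtx.v0 defaultSucc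

lemma tau_legal : Legal (Ar p) (tau p) := by
  intro l v
  show Edge v (tau p (l ++ [v]))
  unfold tau
  split
  · rename_i w S heq
    have hv : v = Vtx.d := by
      have := congrArg List.getLast? heq
      simpa using this
    subst hv
    exact Edge.db S
  · rw [List.getLast?_concat]
    exact edge_defaultSucc v

lemma tau_eval (S : SP p) : tau p [Vtx.v0, Vtx.e S, Vtx.d] = Vtx.b S := rfl

lemma hist_two (π : ℕ → Vtx p) : hist π 2 = [π 0, π 1, π 2] := by
  simp [hist, List.ofFn_succ]

lemma card_union_lt (S : SP p) (U : SU p) : ¬ (∀ i : Fin (2*p+1), i ∈ S.1 ∨ i ∈ U.1) := by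
  intro h
  have huniv : S.1 ∪ U.1 = Finset.univ := by
    ext i; simpa using h i
  have := Finset.card_union_le S.1 U.1
  rw [huniv, Finset.card_univ, Fintype.card_fin, S.2] at this
  omega

lemma adam_wins : AdamWinsGenReach (Ar p) (Fam p) Vtx.v0 := by
  refine ⟨tau p, tau_legal, ?_⟩
  rintro π ⟨h0, hE⟩ hcons hreach
  obtain ⟨S, h1⟩ : ∃ S, π 1 = Vtx.e S := by
    have := hE 0; rw [h0] at this; exact edge_v0 this
  have h2 : π 2 = Vtx.d := by
    have := hE 1; rw [h1] at this; exact edge_e this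
  have h3 : π 3 = Vtx.b S := by
    have := hcons 2 (by rw [h2]; simp [Ar])
    rw [hist_two, h0, h1, h2, tau_eval] at this
    exact this
  obtain ⟨U, h4⟩ : ∃ U, π 4 = Vtx.c U := by
    have := hE 3; rw [h3] at this; exact edge_b this
  have h5 : ∀ m, π (4 + m) = Vtx.c U := by
    intro m; induction m with
    | zero => exact h4
    | succ m ih =>
      have := hE (4 + m); rw [ih] at this
      exact edge_c this
  apply card_union_lt S U
  intro i
  obtain ⟨n, hn⟩ := hreach i
  have hval : π n = Vtx.v0 ∨ π n = Vtx.e S ∨ π n = Vtx.d ∨ π n = Vtx.b S ∨ π n = Vtx.c U := by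
    rcases Nat.lt_or_ge n 4 with h' | h'
    · interval_cases n
      · exact Or.inl h0
      · exact Or.inr (Or.inl h1)
      · exact Or.inr (Or.inr (Or.inl h2))
      · exact Or.inr (Or.inr (Or.inr (Or.inl h3)))
    · have := h5 (n - 4)
      rw [show 4 + (n - 4) = n from by omega] at this
      exact Or.inr (Or.inr (Or.inr (Or.inr this)))
  rcases hval with h | h | h | h | h <;> rw [h] at hn <;>
    simp [Fam, colors] at hn <;> tauto

section Mem
variable {M : Type}

def memState (μ : MemStruct (Vtx p) M) (S : SP p) : M :=
  μ.upd (μ.upd μ.m0 Vtx.v0 (Vtx.e S)) (Vtx.e S) Vtx.d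

/-- The deviation play used to show Adam must answer with the same set. -/
def devPlay (S T : SP p) (U : SU p) : ℕ → Vtx p := fun n =>
  match n with
  | 0 => Vtx.v0
  | 1 => Vtx.e S
  | 2 => Vtx.d
  | 3 => Vtx.b T
  | _ + 4 => Vtx.c U

lemma nu_correct (μ : MemStruct (Vtx p) M) (ν : Vtx p → M → Vtx p)
    (hwin : AdamWinsWithMem (Ar p) (Fam p) Vtx.v0 μ ν) (S : SP p) :
    ν Vtx.d (memState μ S) = Vtx.b S := by
  obtain ⟨hleg, hw⟩ := hwin
  obtain ⟨T, hT⟩ := edge_d (hleg Vtx.d (memState μ S))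
  rw [hT]
  by_contra hne
  have hne' : T ≠ S := fun h => hne (by rw [h])
  -- the union S ∪ T has at least p+1 elements
  have hST : p + 1 ≤ (S.1 ∪ T.1).card := by
    by_contra hle
    push_neg at hle
    have h1 : S.1 ∪ T.1 = S.1 := by
      apply (Finset.eq_of_subset_of_card_le Finset.subset_union_left ?_).symm
      rw [S.2]; omega
    have h2 : T.1 ⊆ S.1 := by
      rw [← h1]; exact Finset.subset_union_right
    exact hne' (Subtype.ext (Finset.eq_of_subset_of_card_le h2 (by rw [S.2, T.2])))
  set U : SU p := ⟨(S.1 ∪ T.1)ᶜ, by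
    rw [Finset.card_compl]
    simp only [Fintype.card_fin]
    omega⟩ with hU
  have hplay : IsPlay (Ar p) Vtx.v0 (devPlay S T U) := by
    refine ⟨rfl, ?_⟩
    intro n
    rcases n with _ | _ | _ | _ | n
    · exact Edge.v0e S
    · exact Edge.ed S
    · exact Edge.db T
    · exact Edge.bc T U
    · exact Edge.cc U
  have hcons : MemConsistentAdam (Ar p) μ ν (devPlay S T U) := by
    intro n hn
    rcases n with _ | _ | _ | _ | n
    · exact absurd (by simp [Ar, devPlay]) hn
    · exact absurd (by simp [Ar, devPlay]) hn
    · show Vtx.b T = ν Vtx.d (memTrace μ (devPlay S T U) 2)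
      have : memTrace μ (devPlay S T U) 2 = memState μ S := rfl
      rw [this, hT]
    · exact absurd (by simp [Ar, devPlay]) hn
    · exact absurd (by simp [Ar, devPlay]) hn
  apply hw _ hplay hcons
  intro i
  by_cases hiS : i ∈ S.1
  · exact ⟨1, hiS⟩
  by_cases hiT : i ∈ T.1
  · exact ⟨3, hiT⟩
  · refine ⟨4, ?_⟩
    show i ∈ U.1
    rw [hU]
    simp [hiS, hiT]

lemma memState_injective (inst : Fintype M) (μ : MemStruct (Vtx p) M)
    (ν : Vtx p → M → Vtx p) (hwin : AdamWinsWithMem (Ar p) (Fam p) Vtx.v0 μ ν) :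
    Function.Injective (memState (p := p) μ) := by
  intro S S' h
  have h1 := nu_correct μ ν hwin S
  have h2 := nu_correct μ ν hwin S'
  rw [h] at h1
  rw [h1] at h2
  exact (Vtx.b.injEq _ _ ▸ h2).symm ▸ rfl

end Mem

end AdamLB

/-- for every odd `k = 2p + 1` there is a generalized reachability game
with `k` reachability sets which Adam wins, but where every winning strategy for Adam
needs at least `C(k, p)` memory states. -/
theorem adam_memory_lower_bound (p : ℕ) :
    ∃ (V : Type) (instV : Fintype V) (A : Arena V)
      (F : Fin (2 * p + 1) → Set V) (v0 : V),
      AdamWinsGenReach A F v0 ∧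
      ∀ (M : Type) (inst : Fintype M) (μ : MemStruct V M) (ν : V → M → V),
        AdamWinsWithMem A F v0 μ ν → Nat.choose (2 * p + 1) p ≤ @Fintype.card M inst := by
  refine ⟨AdamLB.Vtx p, inferInstance, AdamLB.Ar p, AdamLB.Fam p, AdamLB.Vtx.v0,
    AdamLB.adam_wins, ?_⟩
  intro M inst μ ν hwin
  have hinj := AdamLB.memState_injective inst μ ν hwin
  have := @Fintype.card_le_of_injective _ _ (by infer_instance) inst _ hinj
  rwa [Fintype.card_finset_len, Fintype.card_fin] at this
end

section
/- In a generalized reachability game where every reachability set is a singleton F_i = {v_i}, Eve wins from vertex v if and only if v ∈ ⋂_i Attr(v_i) and the preorder defined by u ⪯ u' iff u ∈ Attr(u') is total on {v_1,...,v_k}. -/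
variable {V M : Type}

open scoped Classical

namespace SGR

variable {V : Type}

theorem subset_attrStep (A : Arena V) (X : Set V) : X ⊆ AttrStep A X :=
  fun _ hx => Or.inl (Or.inl hx)

theorem attrStep_mono (A : Arena V) {X Y : Set V} (h : X ⊆ Y) : AttrStep A X ⊆ AttrStep A Y := by
  rintro x ((hx | ⟨he, y, hy, hyX⟩) | ⟨he, hall⟩)
  · exact Or.inl (Or.inl (h hx))
  · exact Or.inl (Or.inr ⟨he, y, hy, h hyX⟩)
  · exact Or.inr ⟨he, fun v hv => h (hall v hv)⟩

theorem attrSeq_mono (A : Arena V) (F : Set V) : Monotone (AttrSeq A F) :=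
  monotone_nat_of_le_succ fun _ => subset_attrStep A _

theorem mem_attr_iff (A : Arena V) (F : Set V) (w : V) :
    w ∈ Attr A F ↔ ∃ n, w ∈ AttrSeq A F n := Set.mem_iUnion

theorem subset_attr (A : Arena V) (F : Set V) : F ⊆ Attr A F :=
  fun x hx => (mem_attr_iff A F x).mpr ⟨0, hx⟩

theorem attr_closed [Fintype V] (A : Arena V) (F : Set V) : AttrStep A (Attr A F) ⊆ Attr A F := by
  rintro x ((hx | ⟨he, y, hy, hyA⟩) | ⟨he, hall⟩)
  · exact hx
  · obtain ⟨n, hn⟩ := (mem_attr_iff A F y).mp hyA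
    exact (mem_attr_iff A F x).mpr ⟨n + 1, Or.inl (Or.inr ⟨he, y, hy, hn⟩)⟩
  · have hf : ∀ y : V, ∃ n, A.E x y → y ∈ AttrSeq A F n := by
      intro y
      by_cases hE : A.E x y
      · obtain ⟨n, hn⟩ := (mem_attr_iff A F y).mp (hall y hE)
        exact ⟨n, fun _ => hn⟩
      · exact ⟨0, fun h => absurd h hE⟩
    choose f hf using hf
    refine (mem_attr_iff A F x).mpr ⟨Finset.univ.sup f + 1, Or.inr ⟨he, fun y hy => ?_⟩⟩
    exact attrSeq_mono A F (Finset.le_sup (Finset.mem_univ y)) (hf y hy)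

theorem attr_trans [Fintype V] (A : Arena V) {F G : Set V} (hFG : F ⊆ Attr A G) :
    Attr A F ⊆ Attr A G := by
  have key : ∀ n, AttrSeq A F n ⊆ Attr A G := by
    intro n
    induction n with
    | zero => exact hFG
    | succ n ih => exact fun x hx => attr_closed A G (attrStep_mono A ih hx)
  intro x hx
  obtain ⟨n, hn⟩ := (mem_attr_iff A F x).mp hx
  exact key n hn

noncomputable def rk (A : Arena V) (T : Set V) (w : V) : ℕ := sInf {n | w ∈ AttrSeq A T n}

theorem mem_attrSeq_rk (A : Arena V) (T : Set V) {w : V} (h : w ∈ Attr A T) :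
    w ∈ AttrSeq A T (rk A T w) := by
  obtain ⟨n, hn⟩ := (mem_attr_iff A T w).mp h
  exact Nat.sInf_mem (⟨n, hn⟩ : Set.Nonempty {m | w ∈ AttrSeq A T m})

theorem rk_le (A : Arena V) (T : Set V) {w : V} {n : ℕ} (h : w ∈ AttrSeq A T n) :
    rk A T w ≤ n := Nat.sInf_le (show n ∈ {m | w ∈ AttrSeq A T m} from h)

theorem rk_pos (A : Arena V) {t w : V} (h : w ∈ Attr A {t}) (hne : w ≠ t) :
    1 ≤ rk A {t} w := by
  by_contra hc
  push_neg at hc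
  interval_cases h' : rk A {t} w
  · have := mem_attrSeq_rk A {t} h
    rw [h'] at this
    exact hne this

theorem step_mem (A : Arena V) {t w : V} (h : w ∈ Attr A {t}) (hne : w ≠ t) :
    w ∈ AttrStep A (AttrSeq A {t} (rk A {t} w - 1)) ∧ w ∉ AttrSeq A {t} (rk A {t} w - 1) := by
  have h1 := rk_pos A h hne
  have hmem := mem_attrSeq_rk A {t} h
  constructor
  · have heq : rk A {t} w = (rk A {t} w - 1) + 1 := (Nat.succ_pred_eq_of_pos h1).symm
    rw [heq] at hmem
    exact hmem
  · exact Nat.notMem_of_lt_sInf (Nat.sub_lt h1 one_pos)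

theorem eve_step (A : Arena V) {t w : V} (h : w ∈ Attr A {t}) (hne : w ≠ t) (he : A.eve w) :
    ∃ y, A.E w y ∧ y ∈ AttrSeq A {t} (rk A {t} w - 1) := by
  obtain ⟨hstep, hnot⟩ := step_mem A h hne
  rcases hstep with ((hx | ⟨_, y, hy, hyX⟩) | ⟨hne', _⟩)
  · exact absurd hx hnot
  · exact ⟨y, hy, hyX⟩
  · exact absurd he hne'

theorem adam_step (A : Arena V) {t w : V} (h : w ∈ Attr A {t}) (hne : w ≠ t) (he : ¬ A.eve w) :
    ∀ y, A.E w y → y ∈ AttrSeq A {t} (rk A {t} w - 1) := by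
  obtain ⟨hstep, hnot⟩ := step_mem A h hne
  rcases hstep with ((hx | ⟨he', _⟩) | ⟨_, hall⟩)
  · exact absurd hx hnot
  · exact absurd he' he
  · exact hall

theorem eve_escape (A : Arena V) {F : Set V} {w : V} (h : w ∉ Attr A F) (he : A.eve w) :
    ∀ y, A.E w y → y ∉ Attr A F := by
  intro y hy hyA
  obtain ⟨n, hn⟩ := (mem_attr_iff A F y).mp hyA
  exact h ((mem_attr_iff A F w).mpr ⟨n + 1, Or.inl (Or.inr ⟨he, y, hy, hn⟩)⟩)

theorem adam_escape [Fintype V] (A : Arena V) {F : Set V} {w : V} (h : w ∉ Attr A F)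
    (he : ¬ A.eve w) : ∃ y, A.E w y ∧ y ∉ Attr A F := by
  by_contra hc
  push_neg at hc
  exact h (attr_closed A F (Or.inr ⟨he, hc⟩))

noncomputable def anySucc (A : Arena V) (w : V) : V := (A.succ_exists w).choose

theorem anySucc_edge (A : Arena V) (w : V) : A.E w (anySucc A w) := (A.succ_exists w).choose_spec

end SGR
namespace SGR

variable {V : Type}

/-! ### history lemmas -/

theorem hist_zero (π : ℕ → V) : hist π 0 = [π 0] := by
  simp [hist]

theorem hist_succ (π : ℕ → V) (n : ℕ) : hist π (n + 1) = hist π n ++ [π (n + 1)] := by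
  show List.ofFn (fun i : Fin (n + 2) => π i) = _
  rw [List.ofFn_succ' (fun i : Fin (n + 2) => π i), List.concat_eq_append]
  simp [hist]

theorem hist_getLast? (π : ℕ → V) (n : ℕ) : (hist π n).getLast? = some (π n) := by
  cases n with
  | zero => rw [hist_zero]; rfl
  | succ n => rw [hist_succ, List.getLast?_concat]

theorem mem_hist {π : ℕ → V} {n : ℕ} {x : V} : x ∈ hist π n ↔ ∃ m, m ≤ n ∧ π m = x := by
  simp only [hist, List.mem_ofFn, Set.mem_range]
  constructor
  · rintro ⟨i, hi⟩
    exact ⟨i, Nat.lt_succ_iff.mp i.isLt, hi⟩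
  · rintro ⟨m, hm, h⟩
    exact ⟨⟨m, Nat.lt_succ_of_le hm⟩, h⟩

/-! ### dropWhile / chain helpers -/

theorem head_dropWhile {p : V → Bool} :
    ∀ (l : List V) {t rest}, l.dropWhile p = t :: rest → p t = false := by
  intro l
  induction l with
  | nil => intro t rest h; simp at h
  | cons a l ih =>
    intro t rest h
    rw [List.dropWhile_cons] at h
    by_cases hpa : p a = true
    · rw [if_pos hpa] at h; exact ih h
    · rw [if_neg hpa] at h
      obtain ⟨rfl, -⟩ := List.cons.injEq .. ▸ h
      · exact Bool.eq_false_iff.mpr hpa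

theorem chain'_suffix {R : V → V → Prop} {l₁ l₂ : List V} (h : List.Chain' R (l₁ ++ l₂)) :
    List.Chain' R l₂ := (List.isChain_append.mp h).2.1

theorem chain'_dropWhile {R : V → V → Prop} {p : V → Bool} {l : List V}
    (h : List.Chain' R l) : List.Chain' R (l.dropWhile p) := by
  have := List.takeWhile_append_dropWhile (p := p) (l := l)
  rw [← this] at h
  exact chain'_suffix h

theorem chain_drop {R : V → V → Prop} (c : V) :
    ∀ (l : List V) (t' : V) (rest' : List V), List.Chain' R l →
      l.dropWhile (fun x => decide (x = c)) = t' :: rest' →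
      l = t' :: rest' ∨ R c t' := by
  intro l
  induction l with
  | nil => intro t' r' _ h; simp at h
  | cons a l ih =>
    intro t' r' hch h
    by_cases hac : a = c
    · rw [List.dropWhile_cons, if_pos (by simp [hac])] at h
      rcases ih t' r' hch.tail h with heq | hR
      · right; rw [heq] at hch; exact hac ▸ hch.rel_head
      · right; exact hR
    · rw [List.dropWhile_cons, if_neg (by simp [hac])] at h
      exact Or.inl h

end SGR
namespace SGR

variable {V : Type}

noncomputable def attrMove (A : Arena V) (t w : V) : V :=
  if h : ∃ y, A.E w y ∧ y ∈ AttrSeq A {t} (rk A {t} w - 1) then h.choose else anySucc A w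

theorem attrMove_edge (A : Arena V) (t w : V) : A.E w (attrMove A t w) := by
  rw [attrMove]
  split
  · next h => exact h.choose_spec.1
  · exact anySucc_edge A w

theorem attrMove_mem (A : Arena V) {t w : V} (h : w ∈ Attr A {t}) (hne : w ≠ t)
    (he : A.eve w) : attrMove A t w ∈ AttrSeq A {t} (rk A {t} w - 1) := by
  have hex := eve_step A h hne he
  rw [attrMove, dif_pos hex]
  exact hex.choose_spec.2

noncomputable def updRem (rem : List V) (x : V) : List V :=
  rem.dropWhile (fun t => decide (t = x))

noncomputable def remOf (L : List V) (h : List V) : List V := h.foldl updRem L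

noncomputable def sigma (A : Arena V) (L : List V) (u : V) (h : List V) : V :=
  match remOf L h with
  | [] => anySucc A (h.getLast?.getD u)
  | t :: _ => attrMove A t (h.getLast?.getD u)

theorem sigma_nil {A : Arena V} {L : List V} {u : V} {h : List V} (hrem : remOf L h = []) :
    sigma A L u h = anySucc A (h.getLast?.getD u) := by
  unfold sigma
  rw [hrem]

theorem sigma_cons {A : Arena V} {L : List V} {u : V} {h : List V} {t : V} {rest : List V}
    (hrem : remOf L h = t :: rest) :
    sigma A L u h = attrMove A t (h.getLast?.getD u) := by
  unfold sigma
  rw [hrem]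

theorem sigma_legal (A : Arena V) (L : List V) (u : V) : Legal A (sigma A L u) := by
  intro l v
  have hlast : ((l ++ [v]).getLast?.getD u) = v := by rw [List.getLast?_concat]; rfl
  rcases hrem : remOf L (l ++ [v]) with _ | ⟨t, r⟩
  · rw [sigma_nil hrem, hlast]; exact anySucc_edge A v
  · rw [sigma_cons hrem, hlast]; exact attrMove_edge A t v

theorem eve_reach_all [Fintype V] (A : Arena V) (L : List V) (u : V)
    (hchain : List.Chain' (fun a b => a ∈ Attr A {b}) L)
    (hAll : ∀ t ∈ L, u ∈ Attr A {t}) :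
    ∀ π, IsPlay A u π → ConsistentEve A (sigma A L u) π → ∀ x ∈ L, ∃ n, π n = x := by
  intro π hplay hcons
  obtain ⟨h0, hedge⟩ := hplay
  set R : ℕ → List V := fun n => remOf L (hist π n) with hRdef
  have hR0 : R 0 = updRem L (π 0) := by
    show remOf L (hist π 0) = _
    rw [hist_zero]
    rfl
  have hRsucc : ∀ n, R (n + 1) = updRem (R n) (π (n + 1)) := by
    intro n
    show remOf L (hist π (n + 1)) = _
    rw [remOf, hist_succ, List.foldl_append]
    rfl
  have hchainR : ∀ n, List.Chain' (fun a b => a ∈ Attr A {b}) (R n) := by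
    intro n
    induction n with
    | zero => rw [hR0]; exact chain'_dropWhile hchain
    | succ n ih => rw [hRsucc]; exact chain'_dropWhile ih
  have hsig : ∀ n t rest, R n = t :: rest → A.eve (π n) → π (n + 1) = attrMove A t (π n) := by
    intro n t rest hr hev
    rw [hcons n hev, sigma_cons (A := A) (u := u) hr, hist_getLast? π n, Option.getD_some]
  -- the invariant
  have hInv : ∀ n t rest, R n = t :: rest → π n ∈ Attr A {t} ∧ π n ≠ t := by
    intro n
    induction n with
    | zero =>
      intro t rest h
      rw [hR0, h0] at h
      rw [updRem] at h
      have hne : t ≠ u := by simpa using head_dropWhile _ h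
      rw [h0]
      constructor
      · rcases chain_drop u L t rest hchain h with heq | hR
        · exact hAll t (heq ▸ List.mem_cons_self (a := t) (l := rest))
        · exact hR
      · exact fun hh => hne hh.symm
    | succ n ih =>
      intro t rest h
      rw [hRsucc] at h
      rcases hRn : R n with _ | ⟨t0, rest0⟩
      · rw [hRn] at h; simp [updRem] at h
      · obtain ⟨hA0, hne0⟩ := ih t0 rest0 hRn
        have hnext : π (n + 1) ∈ AttrSeq A {t0} (rk A {t0} (π n) - 1) := by
          by_cases hev : A.eve (π n)
          · rw [hsig n t0 rest0 hRn hev]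
            exact attrMove_mem A hA0 hne0 hev
          · exact adam_step A hA0 hne0 hev _ (hedge n)
        have hnextA : π (n + 1) ∈ Attr A {t0} := (mem_attr_iff A _ _).mpr ⟨_, hnext⟩
        rw [hRn, updRem] at h
        have hnet : π (n + 1) ≠ t := by
          have := head_dropWhile _ h
          simp at this
          exact fun hh => this hh.symm
        refine ⟨?_, hnet⟩
        rcases chain_drop (π (n + 1)) (t0 :: rest0) t rest (hRn ▸ hchainR n) h with heq | hRel
        · cases heq
          exact hnextA
        · exact hRel
  -- one-step lemma
  have hstepn : ∀ n t rest, R n = t :: rest →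
      π (n + 1) ∈ AttrSeq A {t} (rk A {t} (π n) - 1) := by
    intro n t rest h
    obtain ⟨hA0, hne0⟩ := hInv n t rest h
    by_cases hev : A.eve (π n)
    · rw [hsig n t rest h hev]
      exact attrMove_mem A hA0 hne0 hev
    · exact adam_step A hA0 hne0 hev _ (hedge n)
  -- progress
  have hprog : ∀ r n t rest, R n = t :: rest → π n ∈ AttrSeq A {t} r →
      ∃ m, n < m ∧ (R m).length < (R n).length := by
    intro r
    induction r with
    | zero =>
      intro n t rest h hmem
      have : π n = t := by simpa [AttrSeq] using hmem
      exact absurd this (hInv n t rest h).2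
    | succ r ih =>
      intro n t rest h hmem
      have hrkle : rk A {t} (π n) - 1 ≤ r := by
        have := rk_le A {t} hmem
        omega
      have hnext' : π (n + 1) ∈ AttrSeq A {t} r :=
        attrSeq_mono A {t} hrkle (hstepn n t rest h)
      by_cases ht : π (n + 1) = t
      · refine ⟨n + 1, Nat.lt_succ_self n, ?_⟩
        rw [hRsucc n, h, updRem, List.dropWhile_cons, if_pos (by simp [ht])]
        have hle := (List.dropWhile_sublist (fun s => decide (s = π (n + 1))) (l := rest)).length_le
        simp only [List.length_cons]
        omega
      · have hsame : R (n + 1) = t :: rest := by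
          rw [hRsucc n, h, updRem, List.dropWhile_cons,
            if_neg (by simp; exact fun hh => ht hh.symm)]
        obtain ⟨m, hm, hlen⟩ := ih (n + 1) t rest hsame hnext'
        refine ⟨m, Nat.lt_trans (Nat.lt_succ_self n) hm, ?_⟩
        rw [hsame] at hlen
        rw [h]
        exact hlen
  -- the remaining list eventually empties
  have hempty : ∃ N, R N = [] := by
    have key : ∀ b n, (R n).length ≤ b → ∃ N, R N = [] := by
      intro b
      induction b with
      | zero => intro n hn; exact ⟨n, List.length_eq_zero_iff.mp (Nat.le_zero.mp hn)⟩
      | succ b ih =>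
        intro n hn
        rcases hRn : R n with _ | ⟨t, rest⟩
        · exact ⟨n, hRn⟩
        · obtain ⟨r, hr⟩ := (mem_attr_iff A {t} (π n)).mp (hInv n t rest hRn).1
          obtain ⟨m, _, hlen⟩ := hprog r n t rest hRn hr
          exact ih m (by omega)
    exact key (R 0).length 0 le_rfl
  -- every dropped element was visited
  have hrec : ∀ n x, x ∈ L → x ∉ R n → ∃ m, m ≤ n ∧ π m = x := by
    intro n
    induction n with
    | zero =>
      intro x hxL hxR
      rw [hR0, updRem] at hxR
      have hx : x ∈ List.takeWhile (fun s => decide (s = π 0)) L := by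
        have hsplit := List.takeWhile_append_dropWhile (p := fun s => decide (s = π 0)) (l := L)
        rcases List.mem_append.mp (hsplit ▸ hxL) with h1 | h2
        · exact h1
        · exact absurd h2 hxR
      have := List.mem_takeWhile_imp hx
      simp at this
      exact ⟨0, le_rfl, this.symm⟩
    | succ n ih =>
      intro x hxL hxR
      rw [hRsucc n, updRem] at hxR
      by_cases hxRn : x ∈ R n
      · have hx : x ∈ List.takeWhile (fun s => decide (s = π (n + 1))) (R n) := by
          have hsplit := List.takeWhile_append_dropWhile (p := fun s => decide (s = π (n + 1))) (l := R n)
          rcases List.mem_append.mp (hsplit ▸ hxRn) with h1 | h2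
          · exact h1
          · exact absurd h2 hxR
        have := List.mem_takeWhile_imp hx
        simp at this
        exact ⟨n + 1, le_rfl, this.symm⟩
      · obtain ⟨m, hm, hpm⟩ := ih x hxL hxRn
        exact ⟨m, Nat.le_succ_of_le hm, hpm⟩
  intro x hxL
  obtain ⟨N, hN⟩ := hempty
  obtain ⟨m, _, hm⟩ := hrec N x hxL (by rw [hN]; exact List.not_mem_nil (a := x))
  exact ⟨m, hm⟩

end SGR
namespace SGR

variable {V : Type}

noncomputable def prefs (u : V) (step : List V → V) : ℕ → List V
  | 0 => [u]
  | n + 1 => prefs u step n ++ [step (prefs u step n)]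

noncomputable def playOf (u : V) (step : List V → V) (n : ℕ) : V :=
  (prefs u step n).getLast?.getD u

theorem playOf_zero (u : V) (step : List V → V) : playOf u step 0 = u := by
  simp [playOf, prefs]

theorem playOf_succ (u : V) (step : List V → V) (n : ℕ) :
    playOf u step (n + 1) = step (prefs u step n) := by
  simp [playOf, prefs, List.getLast?_concat]

theorem prefs_concat (u : V) (step : List V → V) (n : ℕ) :
    ∃ l, prefs u step n = l ++ [playOf u step n] := by
  cases n with
  | zero => exact ⟨[], by simp [prefs, playOf_zero]⟩
  | succ n => exact ⟨prefs u step n, by rw [prefs, playOf_succ]⟩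

theorem prefs_eq_hist (u : V) (step : List V → V) :
    ∀ n, prefs u step n = hist (playOf u step) n := by
  intro n
  induction n with
  | zero => rw [hist_zero, playOf_zero]; rfl
  | succ n ih => rw [hist_succ, ← ih, playOf_succ, prefs]

/-- A generic Adam counter-step: at Eve's vertices follow `σ`; at Adam's vertices
use the supplied choice function `c` (mapping history and current vertex to a move). -/
noncomputable def advStep (A : Arena V) (σ : List V → V) (u : V)
    (c : List V → V → V) (l : List V) : V :=
  if A.eve (l.getLast?.getD u) then σ l else c l (l.getLast?.getD u)

theorem advStep_play (A : Arena V) (σ : List V → V) (hσ : Legal A σ) (u : V)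
    (c : List V → V → V) (hc : ∀ l w, ¬ A.eve w → A.E w (c l w)) :
    IsPlay A u (playOf u (advStep A σ u c)) ∧
      ConsistentEve A σ (playOf u (advStep A σ u c)) := by
  set step := advStep A σ u c with hstep
  set π := playOf u step with hπ
  have hlast : ∀ n, (prefs u step n).getLast?.getD u = π n := fun n => rfl
  have hedge : ∀ n, A.E (π n) (π (n + 1)) := by
    intro n
    rw [hπ, playOf_succ, hstep, advStep, hlast]
    by_cases hev : A.eve (π n)
    · rw [if_pos hev]
      obtain ⟨l, hl⟩ := prefs_concat u step n
      rw [hl]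
      exact hσ l (π n)
    · rw [if_neg hev]
      exact hc _ _ hev
  refine ⟨⟨playOf_zero u step, hedge⟩, ?_⟩
  intro n hev
  rw [hπ, playOf_succ, hstep, advStep, hlast, if_pos hev, prefs_eq_hist]

theorem advStep_eq_of_adam (A : Arena V) (σ : List V → V) (u : V) (c : List V → V → V)
    (n : ℕ) (hev : ¬ A.eve (playOf u (advStep A σ u c) n)) :
    playOf u (advStep A σ u c) (n + 1) =
      c (prefs u (advStep A σ u c) n) (playOf u (advStep A σ u c) n) := by
  rw [playOf_succ, advStep]
  exact if_neg hev

/-- the escape move out of the complement of an attractor -/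
noncomputable def escMove (A : Arena V) (S : Set V) (w : V) : V :=
  if h : ∃ y, A.E w y ∧ y ∉ S then h.choose else anySucc A w

theorem escMove_edge (A : Arena V) (S : Set V) (w : V) : A.E w (escMove A S w) := by
  rw [escMove]
  split
  · next h => exact h.choose_spec.1
  · exact anySucc_edge A w

theorem escMove_escapes [Fintype V] (A : Arena V) (F : Set V) {w : V}
    (h : w ∉ Attr A F) (he : ¬ A.eve w) : escMove A (Attr A F) w ∉ Attr A F := by
  have hex := adam_escape A h he
  rw [escMove, dif_pos hex]
  exact hex.choose_spec.2

/-- If Eve wins the (generalized) reachability game visiting `{t}`, then `u ∈ Attr A {t}`. -/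
theorem attr_of_wins [Fintype V] (A : Arena V) {u t : V} (σ : List V → V) (hσ : Legal A σ)
    (hwin : ∀ π, IsPlay A u π → ConsistentEve A σ π → ∃ n, π n = t) :
    u ∈ Attr A {t} := by
  by_contra hu
  set c : List V → V → V := fun _ w => escMove A (Attr A {t}) w with hc
  obtain ⟨hplay, hconsis⟩ := advStep_play A σ hσ u c
    (fun l w hw => escMove_edge A (Attr A {t}) w)
  set π := playOf u (advStep A σ u c) with hπ
  have hinv : ∀ n, π n ∉ Attr A {t} := by
    intro n
    induction n with
    | zero => rw [hπ, playOf_zero]; exact hu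
    | succ n ih =>
      by_cases hev : A.eve (π n)
      · exact eve_escape A ih hev _ (hplay.2 n)
      · rw [hπ, advStep_eq_of_adam A σ u c n hev]
        exact escMove_escapes A {t} ih hev
  obtain ⟨n, hn⟩ := hwin π hplay hconsis
  exact hinv n (hn ▸ subset_attr A {t} rfl)
end SGR
namespace SGR

variable {V : Type}

noncomputable def totMove (A : Arena V) (a b : V) (l : List V) (w : V) : V :=
  if l.find? (fun x => decide (x = a ∨ x = b)) = some a then escMove A (Attr A {b}) w
  else if (l.find? (fun x => decide (x = a ∨ x = b))).isSome then escMove A (Attr A {a}) w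
  else anySucc A w

theorem totMove_edge (A : Arena V) (a b : V) (l : List V) (w : V) :
    A.E w (totMove A a b l w) := by
  unfold totMove
  split_ifs
  · exact escMove_edge A _ w
  · exact escMove_edge A _ w
  · exact anySucc_edge A w

theorem totMove_eq_first {A : Arena V} {a b : V} {l : List V} (w : V)
    (hf : l.find? (fun x => decide (x = a ∨ x = b)) = some a) :
    totMove A a b l w = escMove A (Attr A {b}) w := by
  rw [totMove, if_pos hf]

theorem totMove_eq_second {A : Arena V} {a b : V} {l : List V} (w : V) (hab : a ≠ b)
    (hf : l.find? (fun x => decide (x = a ∨ x = b)) = some b) :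
    totMove A a b l w = escMove A (Attr A {a}) w := by
  rw [totMove, if_neg (by rw [hf]; simp; exact fun h => hab h.symm), if_pos (by rw [hf]; rfl)]

theorem total_of_wins [Fintype V] (A : Arena V) {u a b : V} (σ : List V → V) (hσ : Legal A σ)
    (hwina : ∀ π, IsPlay A u π → ConsistentEve A σ π → ∃ n, π n = a)
    (hwinb : ∀ π, IsPlay A u π → ConsistentEve A σ π → ∃ n, π n = b) :
    a ∈ Attr A {b} ∨ b ∈ Attr A {a} := by
  by_contra hcontra
  push_neg at hcontra
  obtain ⟨hna, hnb⟩ := hcontra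
  have hab : a ≠ b := by
    intro h
    exact hna (h ▸ subset_attr A {b} rfl)
  set c : List V → V → V := totMove A a b with hc
  obtain ⟨hplay, hconsis⟩ := advStep_play A σ hσ u c (fun l w _ => totMove_edge A a b l w)
  set π := playOf u (advStep A σ u c) with hπ
  set p : V → Bool := fun x => decide (x = a ∨ x = b) with hp
  -- first hitting time of {a, b}
  have hexN : ∃ N, (π N = a ∨ π N = b) ∧ ∀ m, m < N → ¬(π m = a ∨ π m = b) := by
    obtain ⟨n, hn⟩ := hwina π hplay hconsis
    have hne : ∃ n, π n = a ∨ π n = b := ⟨n, Or.inl hn⟩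
    exact ⟨Nat.find hne, Nat.find_spec hne, fun m hm => Nat.find_min hne hm⟩
  obtain ⟨N, hNp, hmin⟩ := hexN
  have hpN : p (π N) = true := decide_eq_true hNp
  have findfact : ∀ n, N ≤ n → (hist π n).find? p = some (π N) := by
    intro n
    induction n with
    | zero =>
      intro h
      have hN0 : N = 0 := Nat.le_zero.mp h
      rw [hist_zero, ← hN0]
      exact List.find?_cons_of_pos hpN
    | succ m ih =>
      intro h
      rw [hist_succ, List.find?_append]
      rcases le_or_gt N m with hle | hlt
      · rw [ih hle]; rfl
      · have hNeq : N = m + 1 := by omega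
        have hnone : (hist π m).find? p = none := by
          rw [List.find?_eq_none]
          intro x hx
          obtain ⟨j, hj, hjx⟩ := mem_hist.mp hx
          have hjN : j < N := by omega
          rw [← hjx]
          simpa [hp] using hmin j hjN
        rw [hnone, ← hNeq]
        have : List.find? p [π N] = some (π N) := List.find?_cons_of_pos hpN
        rw [this]
        rfl
  -- the vertex first hit
  rcases hNp with hcase | hcase
  · -- π N = a : Adam forever avoids Attr {b}
    have hAinv : ∀ n, N ≤ n → π n ∉ Attr A {b} := by
      intro n
      induction n with
      | zero =>
        intro h
        have hN0 : N = 0 := Nat.le_zero.mp h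
        rw [← hN0, hcase]
        exact hna
      | succ m ih =>
        intro h
        rcases le_or_gt N m with hle | hlt
        · have ihm := ih hle
          by_cases hev : A.eve (π m)
          · exact eve_escape A ihm hev _ (hplay.2 m)
          · rw [hπ, advStep_eq_of_adam A σ u c m hev]
            have hf : (prefs u (advStep A σ u c) m).find? p = some a := by
              rw [prefs_eq_hist, ← hπ, findfact m hle, hcase]
            rw [hc, totMove_eq_first _ hf]
            exact escMove_escapes A {b} ihm hev
        · have hNeq : N = m + 1 := by omega
          rw [← hNeq, hcase]
          exact hna
    obtain ⟨n, hn⟩ := hwinb π hplay hconsis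
    rcases lt_or_ge n N with h | h
    · exact hmin n h (Or.inr hn)
    · exact hAinv n h (hn ▸ subset_attr A {b} rfl)
  · -- π N = b : Adam forever avoids Attr {a}
    have hAinv : ∀ n, N ≤ n → π n ∉ Attr A {a} := by
      intro n
      induction n with
      | zero =>
        intro h
        have hN0 : N = 0 := Nat.le_zero.mp h
        rw [← hN0, hcase]
        exact hnb
      | succ m ih =>
        intro h
        rcases le_or_gt N m with hle | hlt
        · have ihm := ih hle
          by_cases hev : A.eve (π m)
          · exact eve_escape A ihm hev _ (hplay.2 m)
          · rw [hπ, advStep_eq_of_adam A σ u c m hev]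
            have hf : (prefs u (advStep A σ u c) m).find? p = some b := by
              rw [prefs_eq_hist, ← hπ, findfact m hle, hcase]
            rw [hc, totMove_eq_second _ hab hf]
            exact escMove_escapes A {a} ihm hev
        · have hNeq : N = m + 1 := by omega
          rw [← hNeq, hcase]
          exact hnb
    obtain ⟨n, hn⟩ := hwina π hplay hconsis
    rcases lt_or_ge n N with h | h
    · exact hmin n h (Or.inl hn)
    · exact hAinv n h (hn ▸ subset_attr A {a} rfl)

end SGR
/-- with singleton reachability sets `{v_1},…,{v_k}`, Eve wins from `u`
iff `u` is in every attractor `Attr(v_i)` and the reachability preorder is total on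
`{v_1,…,v_k}`. -/
theorem singleton_genReach_characterization {V : Type} [Fintype V] {k : ℕ}
    (A : Arena V) (v : Fin k → V) (u : V) :
    EveWinsGenReach A (fun i => {v i}) u ↔
      ((∀ i, u ∈ Attr A {v i}) ∧
        ∀ i j, v i ∈ Attr A {v j} ∨ v j ∈ Attr A {v i}) := by
  constructor
  · rintro ⟨σ, hσ, hwin⟩
    have hreach : ∀ i : Fin k, ∀ π, IsPlay A u π → ConsistentEve A σ π → ∃ n, π n = v i := by
      intro i π hp hc
      obtain ⟨n, hn⟩ := hwin π hp hc i
      exact ⟨n, hn⟩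
    exact ⟨fun i => SGR.attr_of_wins A σ hσ (hreach i),
      fun i j => SGR.total_of_wins A σ hσ (hreach i) (hreach j)⟩
  · rintro ⟨hmem, htot⟩
    classical
    set le : Fin k → Fin k → Bool := fun i j => decide (v i ∈ Attr A {v j}) with hle
    have htrans : ∀ i j l : Fin k, le i j = true → le j l = true → le i l = true := by
      intro i j l hij hjl
      simp only [hle, decide_eq_true_eq] at *
      exact SGR.attr_trans A (Set.singleton_subset_iff.mpr hjl) hij
    have htotal : ∀ i j : Fin k, (le i j || le j i) = true := by
      intro i j
      rcases htot i j with h | h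
      · simp [hle, h]
      · simp [hle, h]
    set L : List V := ((List.finRange k).mergeSort le).map v with hL
    have hmemL : ∀ i : Fin k, v i ∈ L := by
      intro i
      refine List.mem_map.mpr ⟨i, ?_, rfl⟩
      exact (List.mergeSort_perm (List.finRange k) le).mem_iff.mpr (List.mem_finRange i)
    have hAll : ∀ t ∈ L, u ∈ Attr A {t} := by
      intro t ht
      obtain ⟨i, -, rfl⟩ := List.mem_map.mp ht
      exact hmem i
    have hchain : List.Chain' (fun a b => a ∈ Attr A {b}) L := by
      have hpw : List.Pairwise (fun i j => le i j = true) ((List.finRange k).mergeSort le) :=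
        List.pairwise_mergeSort htrans htotal (List.finRange k)
      have hpw' : List.Pairwise (fun i j : Fin k => v i ∈ Attr A {v j})
          ((List.finRange k).mergeSort le) := hpw.imp (by
        intro i j h
        simpa [hle] using h)
      exact (List.pairwise_map.mpr hpw').isChain
    refine ⟨SGR.sigma A L u, SGR.sigma_legal A L u, ?_⟩
    intro π hp hc i
    obtain ⟨n, hn⟩ := SGR.eve_reach_all A L u hchain hAll π hp hc (v i) (hmemL i)
    exact ⟨n, hn⟩
end

section
/- Let G be a one-player generalized reachability game (all vertices belong to Eve) with reachability sets F_i = {x_i, y_i} of size two, and starting vertex v0 from which every F_i is reachable. Then Eve wins from v0 if and only if there exists a sequence of colored vertices v_1,...,v_k such that v_0 ⪯ v_1 ⪯ ... ⪯ v_k (where u ⪯ u' means there is a path from u to u') and each color i has a representative among v_1,...,v_k (i.e., for each i, some v_j ∈ F_i). -/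
variable {V M : Type}

section AuxForStmt18
variable {V : Type}

private lemma aux18_hist_length (π : ℕ → V) (n : ℕ) : (hist π n).length = n + 1 := by
  simp [hist]

private lemma aux18_hist_zero (π : ℕ → V) : hist π 0 = [π 0] := by
  simp [hist, List.ofFn_succ]

private lemma aux18_hist_succ (π : ℕ → V) (n : ℕ) :
    hist π (n + 1) = hist π n ++ [π (n + 1)] := by
  show List.ofFn _ = _
  rw [List.ofFn_succ']
  simp [hist, List.concat_eq_append]

private lemma aux18_hist_getLast? (π : ℕ → V) (n : ℕ) :
    (hist π n).getLast? = some (π n) := by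
  show (List.ofFn _).getLast? = _
  rw [List.ofFn_succ']
  simp [List.concat_eq_append]

private lemma aux18_play_rtg {A : Arena V} {π : ℕ → V} (hE : ∀ n, A.E (π n) (π (n + 1)))
    {m n : ℕ} (h : m ≤ n) : Relation.ReflTransGen A.E (π m) (π n) := by
  induction n, h using Nat.le_induction with
  | base => exact .refl
  | succ n hmn ih => exact ih.tail (hE n)

private lemma aux18_rtg_fin {r : V → V → Prop} {a b : V} (h : Relation.ReflTransGen r a b) :
    ∃ (N : ℕ) (p : ℕ → V), p 0 = a ∧ p N = b ∧ ∀ n < N, r (p n) (p (n + 1)) := by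
  induction h with
  | refl => exact ⟨0, fun _ => a, rfl, rfl, by omega⟩
  | @tail b c hab hbc ih =>
    obtain ⟨N, p, hp0, hpN, hpE⟩ := ih
    refine ⟨N + 1, fun n => if n ≤ N then p n else c, ?_, ?_, ?_⟩
    · simpa using hp0
    · simp
    · intro n hn
      beta_reduce
      rcases Nat.lt_or_ge n N with h1 | h1
      · rw [if_pos (show n ≤ N by omega), if_pos (show n + 1 ≤ N by omega)]
        exact hpE n h1
      · have hnN : n = N := by omega
        rw [if_pos (show n ≤ N by omega), if_neg (show ¬ n + 1 ≤ N by omega), hnN, hpN]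
        exact hbc

private lemma aux18_concat (A : Arena V) (m : ℕ) (t : ℕ → V)
    (h : ∀ i < m, Relation.ReflTransGen A.E (t i) (t (i + 1))) :
    ∃ (N : ℕ) (p : ℕ → V) (τ : ℕ → ℕ), p 0 = t 0 ∧ p N = t m ∧
      (∀ n < N, A.E (p n) (p (n + 1))) ∧ ∀ i ≤ m, τ i ≤ N ∧ p (τ i) = t i := by
  induction m with
  | zero =>
    refine ⟨0, fun _ => t 0, fun _ => 0, rfl, rfl, by omega, ?_⟩
    intro i hi
    interval_cases i
    exact ⟨le_refl 0, rfl⟩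
  | succ m ih =>
    obtain ⟨N, p, τ, hp0, hpN, hpE, hτ⟩ := ih (fun i hi => h i (by omega))
    obtain ⟨N', q, hq0, hqN, hqE⟩ := aux18_rtg_fin (h m (by omega))
    have hkey : ∀ j, N ≤ j → (if j ≤ N then p j else q (j - N)) = q (j - N) := by
      intro j hj
      rcases Nat.lt_or_ge N j with h1 | h1
      · rw [if_neg (show ¬ j ≤ N by omega)]
      · have hjN : j = N := by omega
        rw [if_pos (show j ≤ N by omega), hjN, hpN, Nat.sub_self, hq0]
    refine ⟨N + N', fun n => if n ≤ N then p n else q (n - N),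
      fun i => if i ≤ m then τ i else N + N', ?_, ?_, ?_, ?_⟩
    · simpa using hp0
    · beta_reduce
      rw [hkey _ (by omega)]
      simpa using hqN
    · intro n hn
      beta_reduce
      rcases Nat.lt_or_ge n N with h1 | h1
      · rw [if_pos (show n ≤ N by omega), if_pos (show n + 1 ≤ N by omega)]
        exact hpE n h1
      · rw [hkey n h1, hkey (n + 1) (by omega)]
        have : n + 1 - N = (n - N) + 1 := by omega
        rw [this]
        exact hqE (n - N) (by omega)
    · intro i hi
      beta_reduce
      rcases Nat.lt_or_ge m i with h1 | h1
      · have : i = m + 1 := by omega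
        subst this
        rw [if_neg (show ¬ m + 1 ≤ m by omega)]
        refine ⟨le_refl _, ?_⟩
        rw [hkey _ (by omega)]
        simpa using hqN
      · obtain ⟨h2, h3⟩ := hτ i h1
        rw [if_pos h1, if_pos h2]
        exact ⟨by omega, h3⟩

end AuxForStmt18

/-- in a one-player generalized reachability game with size-two color
sets `F_i = {x_i, y_i}`, from a vertex `v0` from which every `F_i` is reachable, Eve
wins iff there is a chain `v0 ⪯ v_1 ⪯ … ⪯ v_k` of colored vertices covering all colors,
where `⪯` is reachability by a path. -/
theorem one_player_size_two_characterization {V : Type} [Fintype V] {k : ℕ}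
    (A : Arena V) (hone : ∀ w, A.eve w) (x y : Fin k → V) (v0 : V)
    (hreach : ∀ i, ∃ u ∈ ({x i, y i} : Set V), Relation.ReflTransGen A.E v0 u) :
    EveWinsGenReach A (fun i => {x i, y i}) v0 ↔
      ∃ w : Fin (k + 1) → V, w 0 = v0 ∧
        (∀ i : Fin k, Relation.ReflTransGen A.E (w i.castSucc) (w i.succ)) ∧
        (∀ i : Fin k, ∃ j : Fin (k + 1), j ≠ 0 ∧ w j ∈ ({x i, y i} : Set V)) := by
  classical
  constructor
  · rintro ⟨σ, hleg, hwin⟩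
    -- construct the unique play consistent with σ
    set H : ℕ → List V := fun n =>
      Nat.rec [v0] (fun _ ih => ih ++ [σ ih]) n with hHdef
    have hH0 : H 0 = [v0] := rfl
    have hHs : ∀ n, H (n + 1) = H n ++ [σ (H n)] := fun n => rfl
    set π : ℕ → V := fun n => ((H n).getLast?).getD v0 with hπdef
    have hπ0 : π 0 = v0 := rfl
    have hπs : ∀ n, π (n + 1) = σ (H n) := by
      intro n
      show ((H (n + 1)).getLast?).getD v0 = σ (H n)
      rw [hHs, List.getLast?_concat]
      rfl
    have hHhist : ∀ n, H n = hist π n := by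
      intro n
      induction n with
      | zero => rw [hH0, aux18_hist_zero, hπ0]
      | succ n ih => rw [hHs, aux18_hist_succ, hπs, ih]
    have hHconcat : ∀ n, ∃ l, H n = l ++ [π n] := by
      intro n
      cases n with
      | zero => exact ⟨[], by rw [hH0, hπ0]; rfl⟩
      | succ n => exact ⟨hist π n, (hHhist (n + 1)).trans (aux18_hist_succ π n)⟩
    have hplay : IsPlay A v0 π := by
      refine ⟨hπ0, fun n => ?_⟩
      obtain ⟨l, hl⟩ := hHconcat n
      rw [hπs, hl]
      exact hleg l (π n)
    have hcons : ConsistentEve A σ π := by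
      intro n _
      rw [hπs, hHhist]
    have hGR : ∀ i : Fin k, ∃ n, π n ∈ ({x i, y i} : Set V) := hwin π hplay hcons
    choose t ht using hGR
    set s := Tuple.sort t with hsdef
    have hmono := Tuple.monotone_sort t
    rw [← hsdef] at hmono
    set g : Fin (k + 1) → ℕ := fun j =>
      Fin.cases 0 (fun i => t (s i)) j with hgdef
    have hg0 : g 0 = 0 := by simp [hgdef]
    have hgsucc : ∀ i : Fin k, g i.succ = t (s i) := by
      intro i
      simp [hgdef]
    refine ⟨fun j => π (g j), by show π (g 0) = v0; rw [hg0, hπ0], ?_, ?_⟩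
    · intro i
      show Relation.ReflTransGen A.E (π (g i.castSucc)) (π (g i.succ))
      apply aux18_play_rtg hplay.2
      rw [hgsucc]
      rcases Nat.eq_zero_or_pos (i : ℕ) with h0 | h0
      · have e : i.castSucc = 0 := Fin.ext (by simpa using h0)
        rw [e, hg0]
        exact Nat.zero_le _
      · have e : i.castSucc = (⟨(i : ℕ) - 1, by omega⟩ : Fin k).succ := by
          apply Fin.ext
          simp
          omega
        rw [e, hgsucc]
        have hle : (⟨(i : ℕ) - 1, by omega⟩ : Fin k) ≤ i := by
          rw [Fin.le_def]
          simp
        exact hmono hle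
    · intro i
      refine ⟨(s.symm i).succ, Fin.succ_ne_zero _, ?_⟩
      show π (g (s.symm i).succ) ∈ ({x i, y i} : Set V)
      have h1 : g (s.symm i).succ = t i := by
        rw [hgsucc]
        rw [Equiv.apply_symm_apply]
      rw [h1]
      exact ht i
  · rintro ⟨w, hw0, hchain, hcov⟩
    set t : ℕ → V := fun n => w ⟨min n k, by omega⟩ with htdef
    have ht0 : t 0 = v0 := by
      have : (⟨min 0 k, by omega⟩ : Fin (k + 1)) = 0 := Fin.ext (by simp)
      rw [htdef]
      show w ⟨min 0 k, _⟩ = v0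
      rw [this, hw0]
    have hchain' : ∀ i < k, Relation.ReflTransGen A.E (t i) (t (i + 1)) := by
      intro i hi
      have e1 : (⟨min i k, by omega⟩ : Fin (k + 1)) = (⟨i, hi⟩ : Fin k).castSucc :=
        Fin.ext (by simp; omega)
      have e2 : (⟨min (i + 1) k, by omega⟩ : Fin (k + 1)) = (⟨i, hi⟩ : Fin k).succ :=
        Fin.ext (by simp; omega)
      show Relation.ReflTransGen A.E (w ⟨min i k, _⟩) (w ⟨min (i + 1) k, _⟩)
      rw [e1, e2]
      exact hchain ⟨i, hi⟩
    obtain ⟨N, p, τ, hp0, hpN, hpE, hτ⟩ := aux18_concat A k t hchain'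
    set ext : ℕ → V := fun n =>
      Nat.rec (p 0) (fun m ih =>
        if m + 1 ≤ N then p (m + 1) else Classical.choose (A.succ_exists ih)) n with hextdef
    have hext0 : ext 0 = p 0 := rfl
    have hexts : ∀ n, ext (n + 1) =
        if n + 1 ≤ N then p (n + 1) else Classical.choose (A.succ_exists (ext n)) :=
      fun n => rfl
    have hextp : ∀ n ≤ N, ext n = p n := by
      intro n hn
      cases n with
      | zero => exact hext0
      | succ n => rw [hexts, if_pos hn]
    have hextE : ∀ n, A.E (ext n) (ext (n + 1)) := by
      intro n
      rw [hexts]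
      by_cases h : n + 1 ≤ N
      · rw [if_pos h, hextp n (by omega)]
        exact hpE n (by omega)
      · rw [if_neg h]
        exact Classical.choose_spec (A.succ_exists (ext n))
    set σ : List V → V := fun l =>
      if l.getLast? = some (ext (l.length - 1)) then ext l.length
      else (l.getLast?).elim v0 (fun v => Classical.choose (A.succ_exists v)) with hσdef
    refine ⟨σ, ?_, ?_⟩
    · intro l v
      have hlast : (l ++ [v]).getLast? = some v := List.getLast?_concat
      have hlen : (l ++ [v]).length = l.length + 1 := by simp
      by_cases h : v = ext l.length
      · have : σ (l ++ [v]) = ext (l.length + 1) := by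
          rw [hσdef]
          show (if _ then _ else _) = _
          rw [hlast, hlen]
          rw [if_pos (by rw [h]; rfl)]
        rw [this, h]
        exact hextE l.length
      · have : σ (l ++ [v]) = Classical.choose (A.succ_exists v) := by
          rw [hσdef]
          show (if _ then _ else _) = _
          rw [hlast, hlen]
          rw [if_neg (by simpa using h)]
          rfl
        rw [this]
        exact Classical.choose_spec (A.succ_exists v)
    · intro π hplay hcons
      have hπ : ∀ n, π n = ext n := by
        intro n
        induction n with
        | zero => rw [hplay.1, hext0, hp0, ht0]
        | succ n ih =>
          rw [hcons n (hone _), hσdef]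
          show (if _ then _ else _) = _
          rw [aux18_hist_getLast?, aux18_hist_length, ih]
          rw [if_pos (by norm_num)]
      intro i
      obtain ⟨j, hj0, hjm⟩ := hcov i
      refine ⟨τ (j : ℕ), ?_⟩
      have hjk : (j : ℕ) ≤ k := by omega
      obtain ⟨hτle, hτval⟩ := hτ (j : ℕ) hjk
      rw [hπ, hextp _ hτle, hτval]
      have : t (j : ℕ) = w j := by
        show w ⟨min (j : ℕ) k, _⟩ = w j
        congr 1
        exact Fin.ext (by simp; omega)
      rw [this]
      exact hjm
end
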